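/- arXiv:1708.01607 — 9 statements merged into one kernel-verified Lean document; each statement's English description precedes it below -/
import Mathlib

section
/- For every integer m ≥ 3, there exist intersecting families C_1, C_2, ..., C_{m-2} of subsets of [m] = {1,...,m} such that for every subset I ⊆ [m]: if I = ∅ then I belongs to none of the C_j; if I is nonempty and I ≠ [m] then I belongs to exactly |I| - 1 of the families C_j; and [m] belongs to all m-2 of the families C_j. -/
open Finset

theorem stmt_1 (m : ℕ) (hm : 3 ≤ m) :
    ∃ C : Fin (m - 2) → Finset (Finset (Fin m)),
      (∀ j, ∀ A ∈ C j, ∀ B ∈ C j, (A ∩ B).Nonempty) ∧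
      ∀ I : Finset (Fin m),
        (Finset.univ.filter (fun j => I ∈ C j)).card =
          if I = ∅ then 0 else if I = Finset.univ then m - 2 else I.card - 1 := by
  classical
  have ham : m - 2 < m := by omega
  have hbm : m - 1 < m := by omega
  set a : Fin m := ⟨m - 2, ham⟩ with hadef
  set b : Fin m := ⟨m - 1, hbm⟩ with hbdef
  have hab : a ≠ b := by simp only [hadef, hbdef, Fin.mk.injEq, ne_eq]; omega
  set S : Finset (Fin m) → Finset (Fin m) := fun I =>
    if hI : I.Nonempty then
      if a ∈ I ∧ b ∈ I then
        if hc : Iᶜ.Nonempty then insert (Iᶜ.max' hc) ((I.erase a).erase b)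
        else (I.erase a).erase b
      else I.erase (I.max' hI)
    else ∅ with hSdef
  -- every element of S I has value < m - 2
  have hS_small : ∀ I : Finset (Fin m), ∀ x ∈ S I, (x : ℕ) < m - 2 := by
    intro I x hx
    have hxm : (x : ℕ) < m := x.2
    simp only [hSdef] at hx
    split_ifs at hx with hI hmem hc
    · rcases Finset.mem_insert.1 hx with h | h
      · subst h
        have ht : Iᶜ.max' hc ∈ Iᶜ := Finset.max'_mem _ _
        have htI : Iᶜ.max' hc ∉ I := by simpa using ht
        have h1 : Iᶜ.max' hc ≠ a := fun h => htI (h ▸ hmem.1)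
        have h2 : Iᶜ.max' hc ≠ b := fun h => htI (h ▸ hmem.2)
        have := Fin.val_ne_of_ne h1
        have := Fin.val_ne_of_ne h2
        have : ((Iᶜ.max' hc : Fin m) : ℕ) < m := (Iᶜ.max' hc).2
        simp only [hadef, hbdef] at *
        omega
      · have h1 : x ≠ b := (Finset.mem_erase.1 h).1
        have h2 : x ≠ a := (Finset.mem_erase.1 (Finset.mem_erase.1 h).2).1
        have := Fin.val_ne_of_ne h1
        have := Fin.val_ne_of_ne h2
        simp only [hadef, hbdef] at *
        omega
    · have h1 : x ≠ b := (Finset.mem_erase.1 hx).1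
      have h2 : x ≠ a := (Finset.mem_erase.1 (Finset.mem_erase.1 hx).2).1
      have := Fin.val_ne_of_ne h1
      have := Fin.val_ne_of_ne h2
      simp only [hadef, hbdef] at *
      omega
    · -- x ∈ I.erase (I.max' hI)
      have hxmax : x ≠ I.max' hI := (Finset.mem_erase.1 hx).1
      have hxI : x ∈ I := (Finset.mem_erase.1 hx).2
      by_contra hcon
      push_neg at hcon
      have hmax_mem : I.max' hI ∈ I := Finset.max'_mem _ _
      have hle : x ≤ I.max' hI := Finset.le_max' _ _ hxI
      -- x = a or x = b
      have hxval : (x : ℕ) = m - 2 ∨ (x : ℕ) = m - 1 := by omega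
      rcases hxval with h | h
      · -- x = a, so b ∉ I (since ¬(a ∈ I ∧ b ∈ I))
        have hxa : x = a := by simp [hadef, Fin.ext_iff, h]
        have hbI : b ∉ I := fun hb' => hmem ⟨hxa ▸ hxI, hb'⟩
        have hmb : I.max' hI ≠ b := fun h' => hbI (h' ▸ hmax_mem)
        have : ((I.max' hI : Fin m) : ℕ) < m := (I.max' hI).2
        have := Fin.val_ne_of_ne hmb
        have hlev : (x : ℕ) ≤ ((I.max' hI : Fin m) : ℕ) := hle
        have : x = I.max' hI := by
          apply Fin.ext
          simp only [hbdef] at *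
          omega
        exact hxmax this
      · have hxb : x = b := by simp [hbdef, Fin.ext_iff, h]
        have : ((I.max' hI : Fin m) : ℕ) < m := (I.max' hI).2
        have hlev : (x : ℕ) ≤ ((I.max' hI : Fin m) : ℕ) := hle
        have : x = I.max' hI := by
          apply Fin.ext
          omega
        exact hxmax this
    · exact absurd hx (Finset.notMem_empty x)
  -- cardinality of S I
  have hS_card : ∀ I : Finset (Fin m),
      (S I).card = if I = ∅ then 0 else if I = Finset.univ then m - 2 else I.card - 1 := by
    intro I
    by_cases hI0 : I = ∅
    · subst hI0
      simp [hSdef]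
    by_cases hIu : I = Finset.univ
    · subst hIu
      rw [if_neg hI0, if_pos rfl]
      have hI : (Finset.univ : Finset (Fin m)).Nonempty := ⟨a, Finset.mem_univ a⟩
      have hc : ¬ ((Finset.univ : Finset (Fin m))ᶜ.Nonempty) := by simp
      show (S Finset.univ).card = m - 2
      simp only [hSdef]
      rw [dif_pos hI, if_pos ⟨Finset.mem_univ a, Finset.mem_univ b⟩, dif_neg hc,
        Finset.card_erase_of_mem (Finset.mem_erase.2 ⟨Ne.symm hab, Finset.mem_univ b⟩),
        Finset.card_erase_of_mem (Finset.mem_univ a)]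
      simp only [Finset.card_univ, Fintype.card_fin]
      omega
    · have hI : I.Nonempty := Finset.nonempty_iff_ne_empty.2 hI0
      rw [if_neg hI0, if_neg hIu]
      simp only [hSdef, dif_pos hI]
      by_cases hmem : a ∈ I ∧ b ∈ I
      · rw [if_pos hmem]
        have hc : Iᶜ.Nonempty := by
          rw [Finset.nonempty_iff_ne_empty]
          intro h
          exact hIu ((Finset.compl_eq_empty_iff I).1 h)
        rw [dif_pos hc]
        have ht : Iᶜ.max' hc ∈ Iᶜ := Finset.max'_mem _ _
        have htI : Iᶜ.max' hc ∉ I := by simpa using ht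
        have htne : Iᶜ.max' hc ∉ (I.erase a).erase b := fun h =>
          htI (Finset.mem_of_mem_erase (Finset.mem_of_mem_erase h))
        rw [Finset.card_insert_of_notMem htne, Finset.card_erase_of_mem,
          Finset.card_erase_of_mem hmem.1]
        · have h2 : 2 ≤ I.card := Finset.one_lt_card.2 ⟨a, hmem.1, b, hmem.2, hab⟩
          omega
        · exact Finset.mem_erase.2 ⟨Ne.symm hab, hmem.2⟩
      · rw [if_neg hmem, Finset.card_erase_of_mem (Finset.max'_mem _ _)]
  -- intersecting property
  have hS_int : ∀ c : Fin m, (c : ℕ) < m - 2 → ∀ A B : Finset (Fin m),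
      c ∈ S A → c ∈ S B → (A ∩ B).Nonempty := by
    intro c hc A B hA hB
    have key : ∀ D : Finset (Fin m), c ∈ S D →
        (c ∈ D ∧ ∃ y ∈ D, c < y) ∨ (b ∈ D ∧ ∀ y : Fin m, c < y → y ∈ D) := by
      intro D hD
      simp only [hSdef] at hD
      split_ifs at hD with hI hmem hcn
      · rcases Finset.mem_insert.1 hD with h | h
        · right
          refine ⟨hmem.2, fun y hy => ?_⟩
          by_contra hyD
          have : y ∈ Dᶜ := by simpa using hyD
          have := Finset.le_max' _ y this
          rw [← h] at this
          exact absurd hy (not_lt.2 this)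
        · left
          have hcD : c ∈ D := Finset.mem_of_mem_erase (Finset.mem_of_mem_erase h)
          refine ⟨hcD, b, hmem.2, ?_⟩
          simp only [Fin.lt_def, hbdef]
          omega
      · left
        have hcD : c ∈ D := Finset.mem_of_mem_erase (Finset.mem_of_mem_erase hD)
        refine ⟨hcD, b, hmem.2, ?_⟩
        simp only [Fin.lt_def, hbdef]
        omega
      · left
        have hcD : c ∈ D := Finset.mem_of_mem_erase hD
        have hne : c ≠ D.max' hI := (Finset.mem_erase.1 hD).1
        have hle : c ≤ D.max' hI := Finset.le_max' _ _ hcD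
        exact ⟨hcD, D.max' hI, Finset.max'_mem _ _, lt_of_le_of_ne hle hne⟩
      · exact absurd hD (Finset.notMem_empty c)
    rcases key A hA with ⟨hcA, y, hyA, hcy⟩ | ⟨hbA, hallA⟩
    · rcases key B hB with ⟨hcB, _⟩ | ⟨_, hallB⟩
      · exact ⟨c, Finset.mem_inter.2 ⟨hcA, hcB⟩⟩
      · exact ⟨y, Finset.mem_inter.2 ⟨hyA, hallB y hcy⟩⟩
    · rcases key B hB with ⟨hcB, y, hyB, hcy⟩ | ⟨hbB, _⟩
      · exact ⟨y, Finset.mem_inter.2 ⟨hallA y hcy, hyB⟩⟩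
      · exact ⟨b, Finset.mem_inter.2 ⟨hbA, hbB⟩⟩
  -- define the families
  refine ⟨fun j => Finset.univ.filter (fun I => (⟨j.1, by omega⟩ : Fin m) ∈ S I), ?_, ?_⟩
  · intro j A hA B hB
    simp only [Finset.mem_filter] at hA hB
    exact hS_int _ (by exact j.2) A B hA.2 hB.2
  · intro I
    rw [← hS_card I]
    apply Finset.card_bij (fun j _ => (⟨j.1, by omega⟩ : Fin m))
    · intro j hj
      simp only [Finset.mem_filter] at hj
      exact hj.2.2
    · intro j1 h1 j2 h2 h
      exact Fin.ext (by simpa [Fin.ext_iff] using h)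
    · intro x hx
      have hxs := hS_small I x hx
      refine ⟨⟨x.1, hxs⟩, ?_, ?_⟩
      · simp only [Finset.mem_filter, Finset.mem_univ, true_and]
        have hxx : (⟨(⟨x.1, hxs⟩ : Fin (m-2)).1, by omega⟩ : Fin m) = x := Fin.ext rfl
        rw [hxx]
        exact hx
      · exact Fin.ext rfl
end

section
/- For all integers k ≥ r ≥ 3 and 1 ≤ i ≤ k - r + 1, β_i(k, r) ≤ β_i(k-1, r-1) + i + 1. -/
open SimpleGraph

/-- `n` is the number of vertices of a `K_r`-free `k`-partite graph in which
the subgraph induced by any `k - i` parts contains a clique of size `r - 1`. -/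
def BetaWitness (i k r n : ℕ) : Prop :=
  ∃ (G : SimpleGraph (Fin n)) (P : Fin n → Fin k),
    (∀ u v, G.Adj u v → P u ≠ P v) ∧ G.CliqueFree r ∧
    ∀ S : Finset (Fin k), S.card = i →
      ∃ T : Finset (Fin n), G.IsNClique (r - 1) T ∧ ∀ v ∈ T, P v ∉ S

noncomputable def beta (i k r : ℕ) : ℕ := sInf {n | BetaWitness i k r n}

lemma aux_trans {V : Type} [DecidableEq V] {i k r n : ℕ} (e : Fin n ≃ V)
    (G : SimpleGraph V) (P : V → Fin k)
    (h1 : ∀ u v, G.Adj u v → P u ≠ P v) (h2 : G.CliqueFree r)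
    (h3 : ∀ S : Finset (Fin k), S.card = i →
      ∃ T : Finset V, G.IsNClique (r - 1) T ∧ ∀ v ∈ T, P v ∉ S) :
    BetaWitness i k r n := by
  refine ⟨G.comap e, P ∘ e, fun u v h => h1 _ _ h, h2.comap (SimpleGraph.Embedding.comap e.toEmbedding G).isContained, ?_⟩
  intro S hS
  obtain ⟨T, hT, hTS⟩ := h3 S hS
  refine ⟨T.image e.symm, ⟨?_, ?_⟩, ?_⟩
  · intro x hx y hy hxy
    simp only [Finset.coe_image, Set.mem_image, Finset.mem_coe] at hx hy
    obtain ⟨a, ha, rfl⟩ := hx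
    obtain ⟨b, hb, rfl⟩ := hy
    have : a ≠ b := fun h => hxy (by rw [h])
    have := hT.1 ha hb this
    simpa [SimpleGraph.comap] using this
  · rw [Finset.card_image_of_injective _ e.symm.injective, hT.2]
  · intro v hv
    simp only [Finset.mem_image] at hv
    obtain ⟨a, ha, rfl⟩ := hv
    simpa using hTS a ha

lemma aux_exists (i k r : ℕ) (hr : 2 ≤ r) (hkr : r ≤ k) (hi : i ≤ k - r + 1) :
    ∃ n, BetaWitness i k r n := by
  classical
  set V := Fin k × Fin (r - 1) with hV
  let G : SimpleGraph V :=
    { Adj := fun p q => p.1 ≠ q.1 ∧ p.2 ≠ q.2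
      symm := ⟨fun p q h => ⟨h.1.symm, h.2.symm⟩⟩
      loopless := ⟨fun p h => h.1 rfl⟩ }
  have hAdj : ∀ p q : V, G.Adj p q ↔ p.1 ≠ q.1 ∧ p.2 ≠ q.2 := fun _ _ => Iff.rfl
  refine ⟨Fintype.card V, aux_trans (Fintype.equivFin V).symm G Prod.fst ?_ ?_ ?_⟩
  · intro u v h
    exact h.1
  · intro T hT
    have hinj : Set.InjOn Prod.snd (T : Set V) := by
      intro a ha b hb hab
      by_contra hne
      exact ((hT.1 ha hb hne).2) hab
    have hcard : T.card = (T.image Prod.snd).card :=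
      (Finset.card_image_of_injOn hinj).symm
    have : r ≤ r - 1 := by
      calc r = T.card := hT.2.symm
        _ = (T.image Prod.snd).card := hcard
        _ ≤ Fintype.card (Fin (r - 1)) := Finset.card_le_univ _ |>.trans (by simp)
        _ = r - 1 := by simp
    omega
  · intro S hS
    have hcompl : r - 1 ≤ Sᶜ.card := by
      have := Finset.card_compl S
      simp only [Fintype.card_fin] at this
      omega
    obtain ⟨C, hCsub, hCcard⟩ := Finset.exists_subset_card_eq hcompl
    let f := C.orderEmbOfFin hCcard
    refine ⟨(Finset.univ : Finset (Fin (r - 1))).image (fun a => ((f a, a) : V)), ⟨?_, ?_⟩, ?_⟩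
    · intro x hx y hy hxy
      simp only [Finset.coe_image, Set.mem_image] at hx hy
      obtain ⟨a, _, rfl⟩ := hx
      obtain ⟨b, _, rfl⟩ := hy
      have hab : a ≠ b := fun h => hxy (by rw [h])
      exact ⟨fun h => hab (f.injective h), hab⟩
    · rw [Finset.card_image_of_injective, Finset.card_univ, Fintype.card_fin]
      intro a b hab
      exact congrArg Prod.snd hab
    · intro v hv
      simp only [Finset.mem_image] at hv
      obtain ⟨a, _, rfl⟩ := hv
      have : f a ∈ C := C.orderEmbOfFin_mem hCcard a
      have := hCsub this
      simpa using this

lemma aux_step (k r i m : ℕ) (hr : 3 ≤ r) (hkr : r ≤ k) (hi1 : 1 ≤ i)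
    (hi2 : i ≤ k - r + 1) (hW : BetaWitness i (k - 1) (r - 1) m) :
    BetaWitness i k r (m + i + 1) := by
  classical
  obtain ⟨G, P, hP, hGf, hGc⟩ := hW
  set V := Fin m ⊕ Fin (i + 1) with hV
  -- part function
  let Q : V → Fin k := fun x =>
    match x with
    | .inl u => ⟨(P u).val, by have := (P u).isLt; omega⟩
    | .inr j => if h : j.val < i then ⟨j.val, by omega⟩ else ⟨k - 1, by omega⟩
  let G₂ : SimpleGraph V :=
    { Adj := fun x y =>
        (∃ u v, x = .inl u ∧ y = .inl v ∧ G.Adj u v) ∨ (x.isLeft ≠ y.isLeft ∧ Q x ≠ Q y)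
      symm := by
        constructor
        rintro x y (⟨u, v, rfl, rfl, h⟩ | ⟨h1, h2⟩)
        · exact Or.inl ⟨v, u, rfl, rfl, h.symm⟩
        · exact Or.inr ⟨h1.symm, h2.symm⟩
      loopless := by
        constructor
        rintro x (⟨u, v, rfl, h, hadj⟩ | ⟨h1, _⟩)
        · rw [Sum.inl.injEq] at h; subst h; exact G.loopless.irrefl u hadj
        · exact h1 rfl }
  have adj_ll : ∀ u v, G₂.Adj (.inl u) (.inl v) ↔ G.Adj u v := by
    intro u v
    constructor
    · rintro (⟨a, b, h1, h2, h⟩ | ⟨h1, _⟩)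
      · rw [Sum.inl.injEq] at h1 h2; subst h1; subst h2; exact h
      · simp at h1
    · intro h; exact Or.inl ⟨u, v, rfl, rfl, h⟩
  have adj_lr : ∀ u j, G₂.Adj (.inl u) (.inr j) ↔ Q (.inl u) ≠ Q (.inr j) := by
    intro u j
    constructor
    · rintro (⟨a, b, _, h2, _⟩ | ⟨_, h2⟩)
      · exact absurd h2 (by simp)
      · exact h2
    · intro h; exact Or.inr ⟨by simp, h⟩
  have adj_rr : ∀ a b, ¬ G₂.Adj (.inr a) (.inr b) := by
    rintro a b (⟨u, v, h1, _, _⟩ | ⟨h1, _⟩)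
    · exact absurd h1 (by simp)
    · exact h1 rfl
  have hQP : ∀ u, Q (.inl u) ≠ Q (.inr ⟨i, by omega⟩) := by
    intro u h
    have h1 : (Q (Sum.inl u)).val = (P u).val := rfl
    have h2 : (Q (Sum.inr (⟨i, by omega⟩ : Fin (i+1)))).val = k - 1 := by
      simp only [Q]; rw [dif_neg (by simp)]
    have := (P u).isLt
    rw [h] at h1
    omega
  have e : Fin (m + i + 1) ≃ V := (finSumFinEquiv (m := m) (n := i + 1)).symm
  refine aux_trans e G₂ Q ?_ ?_ ?_
  -- partiteness
  · rintro (u | a) (v | b) h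
    · intro hQ
      have hval := congrArg Fin.val hQ
      exact hP u v ((adj_ll u v).mp h) (Fin.ext hval)
    · exact ((adj_lr u b).mp h)
    · exact ((adj_lr v a).mp (h.symm)).symm
    · exact absurd h (adj_rr a b)
  -- clique-free
  · intro T hT
    have hright : T.toRight.card ≤ 1 := by
      rw [Finset.card_le_one]
      intro a ha b hb
      by_contra hne
      exact adj_rr a b (hT.1 (by simpa using ha) (by simpa using hb)
        (fun h => hne (Sum.inr_injective h)))
    have hcards : T.toLeft.card + T.toRight.card = r := by
      rw [Finset.card_toLeft_add_card_toRight, hT.2]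
    have hleft : r - 1 ≤ T.toLeft.card := by omega
    obtain ⟨T₁, hT₁sub, hT₁card⟩ := Finset.exists_subset_card_eq hleft
    refine hGf T₁ ⟨?_, hT₁card⟩
    intro u hu v hv huv
    have hu' : Sum.inl u ∈ T := by simpa using hT₁sub hu
    have hv' : Sum.inl v ∈ T := by simpa using hT₁sub hv
    exact (adj_ll u v).mp (hT.1 hu' hv' (fun h => huv (Sum.inl_injective h)))
  -- cliques avoiding any i parts
  · intro S hS
    set last : Fin k := ⟨k - 1, by omega⟩ with hlastdef
    have hvlt : ∀ x : Fin k, x ≠ last → x.val < k - 1 := by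
      intro x hx
      have := x.isLt
      rcases Nat.lt_or_ge x.val (k-1) with h | h
      · exact h
      · exact absurd (Fin.ext (by omega : x.val = k - 1)) hx
    let down : Fin k → Fin (k - 1) := fun x =>
      if h : x.val < k - 1 then ⟨x.val, h⟩ else ⟨0, by omega⟩
    have hdown_inj : ∀ x y : Fin k, x.val < k - 1 → y.val < k - 1 → down x = down y → x = y := by
      intro x y hx hy h
      simp only [down, dif_pos hx, dif_pos hy] at h
      have hval := congrArg Fin.val h
      exact Fin.ext hval
    have hdownP : ∀ u, down (Q (.inl u)) = P u := by
      intro u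
      have h : (Q (Sum.inl u)).val < k - 1 := (P u).isLt
      simp only [down, dif_pos h]
      exact Fin.ext rfl
    by_cases hlast : last ∈ S
    -- Case B : the new part is among the forbidden ones
    · set S' := S.erase last with hS'
      have hS'card : S'.card = i - 1 := by rw [hS', Finset.card_erase_of_mem hlast, hS]
      have hS'lt : ∀ x ∈ S', x.val < k - 1 := fun x hx =>
        hvlt x (Finset.ne_of_mem_erase hx)
      -- find j with j.val < i and j ∉ S
      have hik : i ≤ k := by omega
      let J : Finset (Fin k) := Finset.univ.map (Fin.castLEEmb hik)
      have hJcard : J.card = i := by simp [J]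
      have : ¬ J ⊆ S' := by
        intro h
        have := Finset.card_le_card h
        omega
      obtain ⟨j, hjJ, hjS'⟩ := Finset.not_subset.mp this
      have hjval : j.val < i := by
        simp only [J, Finset.mem_map, Finset.mem_univ, true_and] at hjJ
        obtain ⟨a, rfl⟩ := hjJ
        exact a.isLt
      have hjlt : j.val < k - 1 := by omega
      have hjS : j ∉ S := by
        intro h
        exact hjS' (Finset.mem_erase.mpr ⟨fun he => by
          have := congrArg Fin.val he
          simp only [hlastdef] at this
          omega, h⟩)
      set Sd : Finset (Fin (k - 1)) := insert (down j) (S'.image down) with hSd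
      have hSdcard : Sd.card = i := by
        rw [hSd, Finset.card_insert_of_notMem, Finset.card_image_of_injOn, hS'card]
        · omega
        · intro x hx y hy hxy
          exact hdown_inj x y (hS'lt x hx) (hS'lt y hy) hxy
        · intro hmem
          obtain ⟨x, hx, hxe⟩ := Finset.mem_image.mp hmem
          exact hjS' (hdown_inj x j (hS'lt x hx) hjlt hxe ▸ hx)
      obtain ⟨T₀, hT₀, hT₀S⟩ := hGc Sd hSdcard
      set w : V := .inr ⟨j.val, by omega⟩ with hw
      have hQw : Q w = j := by
        simp only [Q, hw]
        rw [dif_pos (by exact hjval)]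
      have hPnotSd : ∀ u ∈ T₀, P u ∉ Sd := fun u hu => hT₀S u hu
      have hQl : ∀ u ∈ T₀, Q (.inl u) ≠ Q w := by
        intro u hu h
        rw [hQw] at h
        have : P u = down j := by rw [← hdownP u, h]
        exact hPnotSd u hu (this ▸ Finset.mem_insert_self _ _)
      refine ⟨insert w (T₀.map ⟨Sum.inl, Sum.inl_injective⟩), ⟨?_, ?_⟩, ?_⟩
      · intro x hx y hy hxy
        simp only [Finset.coe_insert, Set.mem_insert_iff, Finset.coe_map,
          Set.mem_image, Finset.mem_coe, Function.Embedding.coeFn_mk] at hx hy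
        rcases hx with rfl | ⟨a, ha, rfl⟩ <;> rcases hy with rfl | ⟨b, hb, rfl⟩
        · exact absurd rfl hxy
        · exact ((adj_lr b ⟨j.val, by omega⟩).mpr (hQl b hb)).symm
        · exact (adj_lr a ⟨j.val, by omega⟩).mpr (hQl a ha)
        · exact (adj_ll a b).mpr (hT₀.1 ha hb (fun h => hxy (by rw [h])))
      · rw [Finset.card_insert_of_notMem (by simp [hw]), Finset.card_map, hT₀.2]
        omega
      · intro v hv
        rcases Finset.mem_insert.mp hv with rfl | hv'
        · rw [hQw]; exact hjS
        · obtain ⟨a, ha, rfl⟩ := Finset.mem_map.mp hv'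
          intro hmem
          have hlt : (Q (Sum.inl a)).val < k - 1 := (P a).isLt
          have hne : Q (Sum.inl a) ≠ last := fun h => by
            rw [h] at hlt; simp [hlastdef] at hlt
          have : Q (Sum.inl a) ∈ S' := Finset.mem_erase.mpr ⟨hne, hmem⟩
          have : down (Q (Sum.inl a)) ∈ S'.image down := Finset.mem_image_of_mem _ this
          rw [hdownP a] at this
          exact hPnotSd a ha (Finset.mem_insert_of_mem this)
    -- Case A : new part is free
    · have hSlt : ∀ x ∈ S, x.val < k - 1 := fun x hx =>
        hvlt x (fun h => hlast (h ▸ hx))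
      set Sd : Finset (Fin (k - 1)) := S.image down with hSd
      have hSdcard : Sd.card = i := by
        rw [hSd, Finset.card_image_of_injOn, hS]
        intro x hx y hy hxy
        exact hdown_inj x y (hSlt x hx) (hSlt y hy) hxy
      obtain ⟨T₀, hT₀, hT₀S⟩ := hGc Sd hSdcard
      set w : V := .inr ⟨i, by omega⟩ with hw
      have hQl : ∀ u, Q (.inl u) ≠ Q w := fun u => hQP u
      refine ⟨insert w (T₀.map ⟨Sum.inl, Sum.inl_injective⟩), ⟨?_, ?_⟩, ?_⟩
      · intro x hx y hy hxy
        simp only [Finset.coe_insert, Set.mem_insert_iff, Finset.coe_map,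
          Set.mem_image, Finset.mem_coe, Function.Embedding.coeFn_mk] at hx hy
        rcases hx with rfl | ⟨a, ha, rfl⟩ <;> rcases hy with rfl | ⟨b, hb, rfl⟩
        · exact absurd rfl hxy
        · exact ((adj_lr b ⟨i, by omega⟩).mpr (hQl b)).symm
        · exact (adj_lr a ⟨i, by omega⟩).mpr (hQl a)
        · exact (adj_ll a b).mpr (hT₀.1 ha hb (fun h => hxy (by rw [h])))
      · rw [Finset.card_insert_of_notMem (by simp [hw]), Finset.card_map, hT₀.2]
        omega
      · intro v hv
        rcases Finset.mem_insert.mp hv with rfl | hv'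
        · have : Q w = last := by
            simp only [Q, hw]; rw [dif_neg (by simp)]
          rw [this]; exact hlast
        · obtain ⟨a, ha, rfl⟩ := Finset.mem_map.mp hv'
          intro hmem
          have : down (Q (Sum.inl a)) ∈ Sd := Finset.mem_image_of_mem _ hmem
          rw [hdownP a] at this
          exact hT₀S a ha this


theorem stmt_3 (k r i : ℕ) (hr : 3 ≤ r) (hkr : r ≤ k) (hi1 : 1 ≤ i) (hi2 : i ≤ k - r + 1) :
    beta i k r ≤ beta i (k - 1) (r - 1) + i + 1 := by
  have hne : ∃ n, BetaWitness i (k - 1) (r - 1) n :=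
    aux_exists i (k - 1) (r - 1) (by omega) (by omega) (by omega)
  have hm : BetaWitness i (k - 1) (r - 1) (beta i (k - 1) (r - 1)) :=
    Nat.sInf_mem (hne : {n | BetaWitness i (k - 1) (r - 1) n}.Nonempty)
  exact Nat.sInf_le (aux_step k r i _ hr hkr hi1 hi2 hm)
end

section
/- For all integers k ≥ r ≥ 2 and 1 ≤ i ≤ k - r + 1, β_i(k, r) ≤ (i+1)(r-1). -/
open SimpleGraph

private lemma strictMono_growth {c : ℕ → ℕ} (h : StrictMono c) :
    ∀ {a b : ℕ}, a ≤ b → c a + b ≤ c b + a := by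
  intro a b hab
  induction b, hab using Nat.le_induction with
  | base => omega
  | succ m ham ih =>
    have h2 : c m < c (m + 1) := h (by omega)
    omega

theorem stmt_4 (k r i : ℕ) (hr : 2 ≤ r) (hkr : r ≤ k) (hi1 : 1 ≤ i) (hi2 : i ≤ k - r + 1) :
    beta i k r ≤ (i + 1) * (r - 1) := by
  apply Nat.sInf_le
  show BetaWitness i k r ((i + 1) * (r - 1))
  classical
  set n := (i + 1) * (r - 1) with hn
  -- decompose a vertex into its index (in `Fin (i+1)`) and class (in `Fin (r-1)`)
  let idx : Fin n → ℕ := fun v => ((finProdFinEquiv.symm v).1 : ℕ)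
  let cls : Fin n → ℕ := fun v => ((finProdFinEquiv.symm v).2 : ℕ)
  have hbound : ∀ v : Fin n, idx v + cls v < k := by
    intro v
    have h1 : idx v < i + 1 := (finProdFinEquiv.symm v).1.isLt
    have h2 : cls v < r - 1 := (finProdFinEquiv.symm v).2.isLt
    omega
  let G : SimpleGraph (Fin n) :=
    SimpleGraph.fromRel (fun u v => cls u < cls v ∧ idx u ≤ idx v)
  let P : Fin n → Fin k := fun v => ⟨idx v + cls v, hbound v⟩
  refine ⟨G, P, ?_, ?_, ?_⟩
  · -- parts are independent
    intro u v huv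
    have : (cls u < cls v ∧ idx u ≤ idx v) ∨ (cls v < cls u ∧ idx v ≤ idx u) := huv.2
    have hne : idx u + cls u ≠ idx v + cls v := by omega
    simpa [P, Fin.ext_iff] using hne
  · -- clique-free
    intro T hT
    have hcard : (Finset.univ : Finset (Fin (r - 1))).card < T.card := by
      rw [hT.2, Finset.card_univ, Fintype.card_fin]
      omega
    obtain ⟨u, hu, v, hv, huv, he⟩ :=
      Finset.exists_ne_map_eq_of_card_lt_of_maps_to hcard
        (fun a (_ : a ∈ T) => Finset.mem_univ ((finProdFinEquiv.symm a).2))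
    have hadj := hT.1 hu hv huv
    have hcls : cls u = cls v := congrArg Fin.val he
    have : (cls u < cls v ∧ idx u ≤ idx v) ∨ (cls v < cls u ∧ idx v ≤ idx u) := hadj.2
    omega
  · -- for each `i`-set of parts, a `K_{r-1}` avoiding them
    intro S hS
    set S' : Finset ℕ := S.image Fin.val with hS'
    have hS'card : S'.card ≤ i := hS ▸ Finset.card_image_le
    set p : ℕ → Prop := fun x => x ∉ S' with hp
    have hinf : (setOf p).Infinite := by
      have : setOf p = (↑S' : Set ℕ)ᶜ := by ext x; simp [p]; exact Iff.rfl
      rw [this]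
      exact (S'.finite_toSet).infinite_compl
    set c : ℕ → ℕ := fun t => Nat.nth p t with hc
    have hcmono : StrictMono c := Nat.nth_strictMono hinf
    have hc_ge : ∀ t, t ≤ c t := fun t => hcmono.le_apply
    have hc_mem : ∀ t, c t ∉ S' := fun t => Nat.nth_mem_of_infinite hinf t
    have hc_le : ∀ t, c t ≤ t + i := by
      intro t
      have hcount : t < Nat.count p (t + i + 1) := by
        have h1 : Nat.count p (t + i + 1) = ((Finset.range (t + i + 1)).filter p).card :=
          Nat.count_eq_card_filter_range p (t + i + 1)
        have h2 : ((Finset.range (t + i + 1)).filter p).card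
            + ((Finset.range (t + i + 1)).filter (fun x => ¬ p x)).card = t + i + 1 := by
          rw [Finset.card_filter_add_card_filter_not, Finset.card_range]
        have h3 : ((Finset.range (t + i + 1)).filter (fun x => ¬ p x)).card ≤ i := by
          refine le_trans (Finset.card_le_card ?_) hS'card
          intro x hx
          simp only [Finset.mem_filter, hp, not_not] at hx
          exact hx.2
        omega
      have h4 : c t < t + i + 1 := Nat.nth_lt_of_lt_count hcount
      omega
    -- the clique vertices
    have hflt : ∀ t : Fin (r - 1), c t - t < i + 1 := by
      intro t; have := hc_le t; have := hc_ge t; omega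
    let F : Fin (r - 1) → Fin n := fun t => finProdFinEquiv (⟨c t - t, hflt t⟩, t)
    have hFidx : ∀ t, idx (F t) = c t - t := by
      intro t; simp only [idx, F, Equiv.symm_apply_apply]
    have hFcls : ∀ t, cls (F t) = (t : ℕ) := by
      intro t; simp only [cls, F, Equiv.symm_apply_apply]
    have hFinj : Function.Injective F := by
      intro a b hab
      have : ((a : ℕ)) = b := by
        have := congrArg cls hab
        rwa [hFcls, hFcls] at this
      exact Fin.ext this
    refine ⟨Finset.image F Finset.univ, ⟨?_, ?_⟩, ?_⟩
    · -- clique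
      intro u hu v hv huv
      simp only [Finset.coe_image, Set.mem_image, Finset.mem_coe] at hu hv
      obtain ⟨a, -, rfl⟩ := hu
      obtain ⟨b, -, rfl⟩ := hv
      have hab : a ≠ b := fun h => huv (by rw [h])
      constructor
      · exact huv
      · rcases lt_trichotomy (a : ℕ) (b : ℕ) with h | h | h
        · left
          refine ⟨by rw [hFcls, hFcls]; exact h, ?_⟩
          rw [hFidx, hFidx]
          have := strictMono_growth hcmono h.le
          have := hc_ge a; have := hc_ge b
          omega
        · exact absurd (Fin.ext h) hab
        · right
          refine ⟨by rw [hFcls, hFcls]; exact h, ?_⟩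
          rw [hFidx, hFidx]
          have := strictMono_growth hcmono h.le
          have := hc_ge a; have := hc_ge b
          omega
    · -- cardinality
      rw [Finset.card_image_of_injective _ hFinj, Finset.card_univ, Fintype.card_fin]
    · -- avoids the parts in `S`
      intro v hv
      simp only [Finset.mem_image, Finset.mem_univ, true_and] at hv
      obtain ⟨t, rfl⟩ := hv
      intro hmem
      apply hc_mem t
      have hval : (P (F t) : ℕ) = c t := by
        simp only [P, hFidx, hFcls]
        have := hc_ge t
        omega
      rw [hS']
      exact Finset.mem_image.2 ⟨P (F t), hmem, hval⟩
end

section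
/- For integers r ≥ 2, i ≥ 2 and k ≥ i(r-1)+1, β_i(k, r) ≤ i(r-1) + 1. In particular, the (r-2)th power of the cycle on i(r-1)+1 vertices (with each vertex in its own part) is K_r-free, and after deleting any i vertices there remain r-1 pairwise adjacent vertices. -/
open SimpleGraph

/-- The `(r-2)`-th power of the cycle `C_n`. -/
def cyc (r n : ℕ) : SimpleGraph (ZMod n) :=
  SimpleGraph.fromRel
    (fun u v => ∃ d : ℕ, 1 ≤ d ∧ d ≤ r - 2 ∧ u - v = (d : ZMod n))

lemma zmod_id {n : ℕ} [NeZero n] (a : ZMod n) : ((a.val : ℕ) : ZMod n) = a := by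
  rw [ZMod.natCast_val, ZMod.cast_id]

lemma cyc_cliqueFree (r n : ℕ) (hr : 2 ≤ r) (hn : 2 * r - 2 ≤ n) [NeZero n] :
    (cyc r n).CliqueFree r := by
  intro T hT
  have hcard : T.card = r := hT.2
  have hTne : T.Nonempty := by
    rw [← Finset.card_pos, hcard]; omega
  obtain ⟨v₀, hv₀⟩ := hTne
  -- every other vertex of `T` is adjacent to `v₀`
  have hadj : ∀ v ∈ T.erase v₀,
      (1 ≤ (v - v₀).val ∧ (v - v₀).val ≤ r - 2) ∨
      (1 ≤ (v₀ - v).val ∧ (v₀ - v).val ≤ r - 2) := by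
    intro v hv
    have hne : v ≠ v₀ := Finset.ne_of_mem_erase hv
    have hvT : v ∈ T := Finset.mem_of_mem_erase hv
    have hAdj : (cyc r n).Adj v v₀ := hT.1 hvT hv₀ hne
    rw [cyc, SimpleGraph.fromRel_adj] at hAdj
    rcases hAdj.2 with ⟨d, hd1, hd2, hdeq⟩ | ⟨d, hd1, hd2, hdeq⟩
    · left
      rw [hdeq, ZMod.val_cast_of_lt (by omega)]
      exact ⟨hd1, hd2⟩
    · right
      rw [hdeq, ZMod.val_cast_of_lt (by omega)]
      exact ⟨hd1, hd2⟩
  classical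
  set Bv : Finset (ZMod n) :=
    (T.erase v₀).filter (fun v => 1 ≤ (v - v₀).val ∧ (v - v₀).val ≤ r - 2) with hBv
  set Av : Finset (ZMod n) := (T.erase v₀) \ Bv with hAv
  have hAmem : ∀ v ∈ Av, 1 ≤ (v₀ - v).val ∧ (v₀ - v).val ≤ r - 2 := by
    intro v hv
    rw [hAv, Finset.mem_sdiff] at hv
    rcases hadj v hv.1 with h | h
    · exact absurd (by rw [hBv, Finset.mem_filter]; exact ⟨hv.1, h⟩) hv.2
    · exact h
  set A' : Finset ℕ := Av.image (fun v => (v₀ - v).val) with hA'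
  set B' : Finset ℕ := Bv.image (fun v => (v - v₀).val) with hB'
  have hAcard : A'.card = Av.card := by
    apply Finset.card_image_of_injOn
    intro x _ y _ hxy
    have : v₀ - x = v₀ - y := ZMod.val_injective n hxy
    have := sub_right_injective this
    exact this
  have hBcard : B'.card = Bv.card := by
    apply Finset.card_image_of_injOn
    intro x _ y _ hxy
    have : x - v₀ = y - v₀ := ZMod.val_injective n hxy
    exact sub_left_injective this
  have hBsub' : Bv ⊆ T.erase v₀ := by rw [hBv]; exact Finset.filter_subset _ _
  have hsplit : Av.card + Bv.card = r - 1 := by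
    rw [hAv, Finset.card_sdiff_of_subset hBsub', Finset.card_erase_of_mem hv₀, hcard]
    have : Bv.card ≤ (T.erase v₀).card := Finset.card_le_card hBsub'
    rw [Finset.card_erase_of_mem hv₀, hcard] at this
    omega
  -- the key property: no `α + β = r - 1`
  have hkey : ∀ α ∈ A', ∀ β ∈ B', α + β ≠ r - 1 := by
    intro α hα β hβ
    rw [hA', Finset.mem_image] at hα
    rw [hB', Finset.mem_image] at hβ
    obtain ⟨x, hx, hxα⟩ := hα
    obtain ⟨y, hy, hyβ⟩ := hβ
    have hxb := hAmem x hx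
    have hyb : 1 ≤ (y - v₀).val ∧ (y - v₀).val ≤ r - 2 := by
      rw [hBv, Finset.mem_filter] at hy; exact hy.2
    have hαb : 1 ≤ α ∧ α ≤ r - 2 := by rw [← hxα]; exact hxb
    have hβb : 1 ≤ β ∧ β ≤ r - 2 := by rw [← hyβ]; exact hyb
    have hxyne : x ≠ y := by
      intro h
      rw [hAv, Finset.mem_sdiff] at hx
      exact hx.2 (h ▸ hy)
    have hxT : x ∈ T := Finset.mem_of_mem_erase (by rw [hAv, Finset.mem_sdiff] at hx; exact hx.1)
    have hyT : y ∈ T := Finset.mem_of_mem_erase (by rw [hBv, Finset.mem_filter] at hy; exact hy.1)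
    have hAdj : (cyc r n).Adj x y := hT.1 hxT hyT hxyne
    have hsum : y - x = ((β + α : ℕ) : ZMod n) := by
      have h1 : ((α : ℕ) : ZMod n) = v₀ - x := by rw [← hxα, zmod_id]
      have h2 : ((β : ℕ) : ZMod n) = y - v₀ := by rw [← hyβ, zmod_id]
      push_cast
      rw [h1, h2]; ring
    rw [cyc, SimpleGraph.fromRel_adj] at hAdj
    intro hcontra
    rcases hAdj.2 with ⟨d, hd1, hd2, hdeq⟩ | ⟨d, hd1, hd2, hdeq⟩
    · -- x - y = d, so n ∣ α + β + d
      have : ((β + α + d : ℕ) : ZMod n) = 0 := by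
        rw [Nat.cast_add, ← hsum, ← hdeq]; ring
      rw [ZMod.natCast_eq_zero_iff] at this
      obtain ⟨c, hc⟩ := this
      have hc2 : β + α + d < 2 * n := by omega
      have hc0 : 0 < β + α + d := by omega
      rcases Nat.lt_or_ge c 2 with hcl | hcl
      · interval_cases c <;> omega
      · have : 2 * n ≤ n * c := by
          calc 2 * n = n * 2 := by ring
          _ ≤ n * c := Nat.mul_le_mul_left n hcl
        omega
    · -- y - x = d, so α + β = d ≤ r - 2
      rw [hsum] at hdeq
      have : β + α = d := by
        have h1 : ((β + α : ℕ) : ZMod n).val = ((d : ℕ) : ZMod n).val := by rw [hdeq]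
        rwa [ZMod.val_cast_of_lt (by omega), ZMod.val_cast_of_lt (by omega)] at h1
      omega
  -- now a counting contradiction
  have hAsub : A' ⊆ Finset.Icc 1 (r - 2) := by
    intro a ha
    rw [hA', Finset.mem_image] at ha
    obtain ⟨x, hx, rfl⟩ := ha
    have := hAmem x hx
    rw [Finset.mem_Icc]; omega
  have hBsub : B' ⊆ Finset.Icc 1 (r - 2) := by
    intro b hb
    rw [hB', Finset.mem_image] at hb
    obtain ⟨y, hy, rfl⟩ := hb
    rw [hBv, Finset.mem_filter] at hy
    rw [Finset.mem_Icc]; omega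
  set C : Finset ℕ := A'.image (fun a => r - 1 - a) with hC
  have hCcard : C.card = A'.card := by
    apply Finset.card_image_of_injOn
    intro a ha b hb hab
    have hab' : r - 1 - a = r - 1 - b := hab
    have ha' := Finset.mem_Icc.1 (hAsub ha)
    have hb' := Finset.mem_Icc.1 (hAsub hb)
    omega
  have hCsub : C ⊆ Finset.Icc 1 (r - 2) := by
    intro c hc
    rw [hC, Finset.mem_image] at hc
    obtain ⟨a, ha, rfl⟩ := hc
    have := Finset.mem_Icc.1 (hAsub ha)
    rw [Finset.mem_Icc]; omega
  have hdisj : Disjoint B' C := by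
    rw [Finset.disjoint_left]
    intro b hb hbC
    rw [hC, Finset.mem_image] at hbC
    obtain ⟨a, ha, hab⟩ := hbC
    have hab' : r - 1 - a = b := hab
    have ha' := Finset.mem_Icc.1 (hAsub ha)
    have hb' := Finset.mem_Icc.1 (hBsub hb)
    exact hkey a ha b hb (by omega)
  have hunion : (B' ∪ C).card ≤ r - 2 := by
    calc (B' ∪ C).card ≤ (Finset.Icc 1 (r - 2)).card :=
          Finset.card_le_card (Finset.union_subset hBsub hCsub)
    _ = r - 2 := by rw [Nat.card_Icc]; omega
  rw [Finset.card_union_of_disjoint hdisj, hCcard] at hunion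
  omega

lemma cyc_clique_avoid (r n i : ℕ) (hr : 2 ≤ r) [NeZero n]
    (hn : i * (r - 1) < n) (hrn : r - 1 ≤ n)
    (S : Finset (ZMod n)) (hS : S.card ≤ i) :
    ∃ T : Finset (ZMod n), (cyc r n).IsNClique (r - 1) T ∧ ∀ v ∈ T, v ∉ S := by
  classical
  set blocked : Finset (ZMod n) :=
    S.biUnion (fun s => (Finset.range (r - 1)).image (fun d : ℕ => s - (d : ZMod n))) with hbl
  have hblcard : blocked.card < n := by
    calc blocked.card ≤ S.card * (r - 1) := by
          rw [hbl]
          apply le_trans (Finset.card_biUnion_le)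
          apply le_trans (Finset.sum_le_card_nsmul S _ (r - 1)
            (fun s _ => le_trans (Finset.card_image_le) (by rw [Finset.card_range])))
          simp [mul_comm]
    _ ≤ i * (r - 1) := Nat.mul_le_mul_right _ hS
    _ < n := hn
  have : ∃ a : ZMod n, a ∉ blocked := by
    by_contra h
    push_neg at h
    have : (Finset.univ : Finset (ZMod n)).card ≤ blocked.card :=
      Finset.card_le_card (fun x _ => h x)
    rw [Finset.card_univ, ZMod.card] at this
    omega
  obtain ⟨a, ha⟩ := this
  refine ⟨(Finset.range (r - 1)).image (fun d : ℕ => a + (d : ZMod n)), ⟨?_, ?_⟩, ?_⟩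
  · -- clique
    intro u hu v hv huv
    rw [Finset.mem_coe, Finset.mem_image] at hu hv
    obtain ⟨d₁, hd₁, rfl⟩ := hu
    obtain ⟨d₂, hd₂, rfl⟩ := hv
    rw [Finset.mem_range] at hd₁ hd₂
    rw [cyc, SimpleGraph.fromRel_adj]
    refine ⟨huv, ?_⟩
    have hne : d₁ ≠ d₂ := fun h => huv (by rw [h])
    rcases Nat.lt_or_ge d₁ d₂ with hlt | hge
    · right
      exact ⟨d₂ - d₁, by omega, by omega, by push_cast [Nat.cast_sub (le_of_lt hlt)]; ring⟩
    · have hlt : d₂ < d₁ := by omega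
      left
      exact ⟨d₁ - d₂, by omega, by omega, by push_cast [Nat.cast_sub (le_of_lt hlt)]; ring⟩
  · -- card
    rw [Finset.card_image_of_injOn, Finset.card_range]
    intro x hx y hy hxy
    rw [Finset.mem_coe, Finset.mem_range] at hx hy
    have : (x : ZMod n) = (y : ZMod n) := by
      have := hxy
      simpa using this
    have h1 : ((x : ℕ) : ZMod n).val = ((y : ℕ) : ZMod n).val := by rw [this]
    rwa [ZMod.val_cast_of_lt (by omega), ZMod.val_cast_of_lt (by omega)] at h1
  · -- avoid S
    intro v hv hvS
    rw [Finset.mem_image] at hv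
    obtain ⟨d, hd, rfl⟩ := hv
    apply ha
    rw [hbl, Finset.mem_biUnion]
    exact ⟨a + d, hvS, Finset.mem_image.2 ⟨d, hd, by ring⟩⟩

lemma betaWitness_holds (k r i : ℕ) (hr : 2 ≤ r) (hi : 2 ≤ i)
    (hk : i * (r - 1) + 1 ≤ k) : BetaWitness i k r (i * (r - 1) + 1) := by
  classical
  set n := i * (r - 1) + 1 with hn
  haveI : NeZero n := ⟨by omega⟩
  have hrr : 2 * (r - 1) ≤ i * (r - 1) := Nat.mul_le_mul_right _ hi
  have e : Fin n ≃ ZMod n := Fintype.equivOfCardEq (by rw [Fintype.card_fin, ZMod.card])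
  refine ⟨(cyc r n).comap e.toEmbedding, fun v => ⟨v.val, lt_of_lt_of_le v.isLt hk⟩,
    ?_, ?_, ?_⟩
  · intro u v huv hP
    simp only [Fin.mk.injEq] at hP
    exact huv.ne (Fin.ext hP)
  · exact (cyc_cliqueFree r n hr (by omega)).comap
      (SimpleGraph.Iso.comap e (cyc r n)).toEmbedding.isContained
  · intro S hS
    set S₀ : Finset (ZMod n) :=
      (Finset.univ.filter (fun v : Fin n =>
        (⟨v.val, lt_of_lt_of_le v.isLt hk⟩ : Fin k) ∈ S)).image e with hS₀
    have hS₀card : S₀.card ≤ i := by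
      rw [hS₀]
      apply le_trans Finset.card_image_le
      rw [← hS]
      apply Finset.card_le_card_of_injOn
        (fun v => (⟨v.val, lt_of_lt_of_le v.isLt hk⟩ : Fin k))
      · intro v hv
        rw [Finset.mem_coe, Finset.mem_filter] at hv
        exact hv.2
      · intro x _ y _ hxy
        simp only [Fin.mk.injEq] at hxy
        exact Fin.ext hxy
    obtain ⟨T, hT, hTavoid⟩ := cyc_clique_avoid r n i hr (by omega) (by omega) S₀ hS₀card
    refine ⟨T.image e.symm, ⟨?_, ?_⟩, ?_⟩
    · intro u hu v hv huv
      rw [Finset.mem_coe, Finset.mem_image] at hu hv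
      obtain ⟨x, hx, rfl⟩ := hu
      obtain ⟨y, hy, rfl⟩ := hv
      have hxy : x ≠ y := fun h => huv (by rw [h])
      have := hT.1 hx hy hxy
      simpa [SimpleGraph.comap] using this
    · rw [Finset.card_image_of_injective _ e.symm.injective]
      exact hT.2
    · intro v hv hvS
      rw [Finset.mem_image] at hv
      obtain ⟨x, hx, rfl⟩ := hv
      apply hTavoid x hx
      rw [hS₀, Finset.mem_image]
      refine ⟨e.symm x, ?_, by simp⟩
      rw [Finset.mem_filter]
      exact ⟨Finset.mem_univ _, hvS⟩

theorem stmt_5 (k r i : ℕ) (hr : 2 ≤ r) (hi : 2 ≤ i) (hk : i * (r - 1) + 1 ≤ k) :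
    beta i k r ≤ i * (r - 1) + 1 ∧
    ∀ G : SimpleGraph (ZMod (i * (r - 1) + 1)),
      G = SimpleGraph.fromRel
        (fun u v => ∃ d : ℕ, 1 ≤ d ∧ d ≤ r - 2 ∧ u - v = (d : ZMod (i * (r - 1) + 1))) →
      G.CliqueFree r ∧
      ∀ S : Finset (ZMod (i * (r - 1) + 1)), S.card = i →
        ∃ T : Finset (ZMod (i * (r - 1) + 1)),
          G.IsNClique (r - 1) T ∧ ∀ v ∈ T, v ∉ S := by
  have hrr : 2 * (r - 1) ≤ i * (r - 1) := Nat.mul_le_mul_right _ hi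
  haveI : NeZero (i * (r - 1) + 1) := ⟨by omega⟩
  constructor
  · exact Nat.sInf_le (betaWitness_holds k r i hr hi hk)
  · intro G hG
    have hGc : G = cyc r (i * (r - 1) + 1) := hG
    subst hGc
    constructor
    · exact cyc_cliqueFree r _ hr (by omega)
    · intro S hS
      exact cyc_clique_avoid r _ i hr (by omega) (by omega) S (le_of_eq hS)
end

section
/- For all integers k ≥ r ≥ 2, β_1(k, r) = 2(r-1). That is, the minimum number of vertices in a K_r-free k-partite graph such that the deletion of any one part leaves a graph containing a clique of size r-1, equals 2r-2. -/
open SimpleGraph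

lemma clique_card_le {V : Type*} {G : SimpleGraph V} {r : ℕ}
    (hG : G.CliqueFree r) {s : Finset V} (hs : G.IsClique s) : s.card ≤ r - 1 := by
  by_contra h
  push_neg at h
  obtain ⟨t, hts, htc⟩ := Finset.exists_subset_card_eq (show r ≤ s.card by omega)
  exact hG t ⟨hs.subset hts, htc⟩

lemma key_lemma {n k r : ℕ} (hr : 1 ≤ r) (G : SimpleGraph (Fin n)) (P : Fin n → Fin k)
    (hG : G.CliqueFree r)
    (hcl : ∀ j : Fin k, ∃ T, G.IsNClique (r-1) T ∧ ∀ v ∈ T, P v ≠ j) :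
    ∀ (b : ℕ) (A B : Finset (Fin n)), A.Nonempty → G.IsClique A →
      Disjoint A B → B.card ≤ b → B.card < A.card →
      (∀ a ∈ A, ∀ w, w ∉ B → w ≠ a → G.Adj a w) → False := by
  classical
  intro b
  induction b with
  | zero =>
    intro A B hA hAcl hdisj hb hlt hadj
    have hB : B = ∅ := Finset.card_eq_zero.mp (Nat.le_zero.mp hb)
    subst hB
    obtain ⟨a, ha⟩ := hA
    obtain ⟨S, hS, hSP⟩ := hcl (P a)
    have haS : a ∉ S := fun h => hSP a h rfl
    refine hG (insert a S) ⟨?_, ?_⟩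
    · intro x hx y hy hxy
      simp only [Finset.coe_insert, Set.mem_insert_iff, Finset.mem_coe] at hx hy
      rcases hx with rfl | hx
      · rcases hy with rfl | hy
        · exact absurd rfl hxy
        · exact hadj x ha y (Finset.notMem_empty y) (fun h => hxy h.symm)
      · rcases hy with rfl | hy
        · exact (hadj y ha x (Finset.notMem_empty x) hxy).symm
        · exact hS.1 hx hy hxy
    · rw [Finset.card_insert_of_notMem haS, hS.2]; omega
  | succ b ih =>
    intro A B hA hAcl hdisj hb hlt hadj
    by_cases hB0 : B.card = 0
    · exact ih A B hA hAcl hdisj (by omega) hlt hadj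
    · set Astar := Finset.univ.filter
        (fun x => x ∉ B ∧ ∀ w, w ∉ B → w ≠ x → G.Adj x w) with hAstar_def
      have hAstarB : ∀ x ∈ Astar, x ∉ B := fun x hx => ((Finset.mem_filter.mp hx).2).1
      have hAstarP : ∀ x ∈ Astar, ∀ w, w ∉ B → w ≠ x → G.Adj x w :=
        fun x hx => ((Finset.mem_filter.mp hx).2).2
      have hAsub : A ⊆ Astar := by
        intro a ha
        simp only [hAstar_def, Finset.mem_filter, Finset.mem_univ, true_and]
        exact ⟨Finset.disjoint_left.mp hdisj ha, fun w hw hwa => hadj a ha w hw hwa⟩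
      have hAstarcl : G.IsClique Astar := by
        intro x hx y hy hxy
        exact hAstarP x hx y (hAstarB y hy) hxy.symm
      obtain ⟨a1, ha1⟩ := hA
      obtain ⟨S, hS, hSP⟩ := hcl (P a1)
      have ha1S : a1 ∉ S := fun h => hSP a1 h rfl
      -- the clique (S \ B) ∪ (Astar \ S)
      set U : Finset (Fin n) := (S \ B) ∪ (Astar \ S) with hU_def
      have hUcl : G.IsClique U := by
        intro x hx y hy hxy
        simp only [hU_def, Finset.coe_union, Set.mem_union, Finset.coe_sdiff, Set.mem_diff,
          Finset.mem_coe] at hx hy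
        rcases hx with ⟨hxS, hxB⟩ | ⟨hxA, hxS⟩
        · rcases hy with ⟨hyS, hyB⟩ | ⟨hyA, hyS⟩
          · exact hS.1 hxS hyS hxy
          · exact (hAstarP y hyA x hxB hxy).symm
        · rcases hy with ⟨hyS, hyB⟩ | ⟨hyA, hyS⟩
          · exact hAstarP x hxA y hyB hxy.symm
          · exact hAstarcl hxA hyA hxy
      have hUdisj : Disjoint (S \ B) (Astar \ S) := by
        rw [Finset.disjoint_left]
        intro x hx hx'
        exact (Finset.mem_sdiff.mp hx').2 (Finset.mem_sdiff.mp hx).1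
      have hUcard : (S \ B).card + (Astar \ S).card ≤ r - 1 := by
        have := clique_card_le hG hUcl
        rwa [hU_def, Finset.card_union_of_disjoint hUdisj] at this
      have e1 : (S \ B).card + (S ∩ B).card = S.card := Finset.card_sdiff_add_card_inter S B
      have e2 : (Astar ∩ S).card + (Astar \ S).card = Astar.card :=
        Finset.card_inter_add_card_sdiff Astar S
      have e3 : (B \ S).card + (B ∩ S).card = B.card := Finset.card_sdiff_add_card_inter B S
      have e4 : (S ∩ B).card = (B ∩ S).card := by rw [Finset.inter_comm]
      have hScard : S.card = r - 1 := hS.2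
      have hAcard : A.card ≤ Astar.card := Finset.card_le_card hAsub
      have ha1A : a1 ∈ Astar \ S := Finset.mem_sdiff.mpr ⟨hAsub ha1, ha1S⟩
      have h5 : 1 ≤ (Astar \ S).card := Finset.card_pos.mpr ⟨a1, ha1A⟩
      -- recurse
      refine ih (Astar ∩ S) (B \ S) ?_ (hAstarcl.subset Finset.inter_subset_left)
        ?_ (by omega) (by omega) ?_
      · apply Finset.card_pos.mp; omega
      · rw [Finset.disjoint_left]
        intro x hx hx'
        exact hAstarB x (Finset.mem_inter.mp hx).1 (Finset.mem_sdiff.mp hx').1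
      · intro a haA w hw hwa
        by_cases hwB : w ∈ B
        · have hwS : w ∈ S := by
            by_contra hws
            exact hw (Finset.mem_sdiff.mpr ⟨hwB, hws⟩)
          exact hS.1 (Finset.mem_inter.mp haA).2 hwS (Ne.symm hwa)
        · exact hAstarP a (Finset.mem_inter.mp haA).1 w hwB hwa

/-- the extremal graph on `2*s` vertices: `a_i = i` for `i < s`, `b_m = m + s`.
`a`'s form a clique, `b`'s form a clique, `a_i ~ b_m` iff `i < m`. -/
def UG (s : ℕ) : SimpleGraph (Fin (2*s)) :=
  SimpleGraph.fromRel (fun v w =>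
    ((v:ℕ) < s ∧ (w:ℕ) < s) ∨ (s ≤ (v:ℕ) ∧ s ≤ (w:ℕ)) ∨
    ((v:ℕ) < s ∧ s ≤ (w:ℕ) ∧ (v:ℕ) < (w:ℕ) - s))

lemma UG_adj {s : ℕ} (v w : Fin (2*s)) : (UG s).Adj v w ↔ (v:ℕ) ≠ (w:ℕ) ∧
    (((v:ℕ) < s ∧ (w:ℕ) < s) ∨ (s ≤ (v:ℕ) ∧ s ≤ (w:ℕ)) ∨
    ((v:ℕ) < s ∧ s ≤ (w:ℕ) ∧ (v:ℕ) < (w:ℕ) - s) ∨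
    ((w:ℕ) < s ∧ s ≤ (v:ℕ) ∧ (w:ℕ) < (v:ℕ) - s)) := by
  rw [UG, SimpleGraph.fromRel_adj]
  constructor
  · rintro ⟨hne, h⟩
    refine ⟨fun hv => hne (Fin.ext hv), ?_⟩
    tauto
  · rintro ⟨hne, h⟩
    refine ⟨fun hv => hne (congrArg Fin.val hv), ?_⟩
    tauto

lemma beta_upper {k r : ℕ} (hr : 2 ≤ r) (hkr : r ≤ k) :
    BetaWitness 1 k r (2 * (r - 1)) := by
  set s := r - 1 with hs_def
  have hs1 : 1 ≤ s := by omega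
  have hsk : s < k := by omega
  refine ⟨UG s, fun v => ⟨if (v:ℕ) < s then (v:ℕ) else (v:ℕ) - s + 1,
    by have := v.isLt; split <;> omega⟩, ?_, ?_, ?_⟩
  · -- parts proper
    intro u v huv heq
    rw [UG_adj] at huv
    have heq' : (if (u:ℕ) < s then (u:ℕ) else (u:ℕ) - s + 1)
        = (if (v:ℕ) < s then (v:ℕ) else (v:ℕ) - s + 1) := congrArg Fin.val heq
    have hu := u.isLt
    have hv := v.isLt
    split_ifs at heq' <;> omega
  · -- clique free
    intro T hT
    have hinj : Set.InjOn (fun v : Fin (2*s) =>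
        (⟨if (v:ℕ) < s then (v:ℕ) else (v:ℕ) - s, by have := v.isLt; split <;> omega⟩ : Fin s))
        T := by
      intro x hx y hy hxy
      by_contra hne
      have hadj := hT.1 hx hy hne
      rw [UG_adj] at hadj
      have hxy' : (if (x:ℕ) < s then (x:ℕ) else (x:ℕ) - s)
          = (if (y:ℕ) < s then (y:ℕ) else (y:ℕ) - s) := congrArg Fin.val hxy
      have hxl := x.isLt
      have hyl := y.isLt
      split_ifs at hxy' <;> omega
    have hle : T.card ≤ s := by
      have := Finset.card_le_card_of_injOn _ (fun x _ => Finset.mem_univ _) hinj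
      simpa using this
    have := hT.2
    omega
  · -- cliques avoiding any single part
    intro S hS
    obtain ⟨j, rfl⟩ := Finset.card_eq_one.mp hS
    have hg : ∀ i : Fin s, (if (i:ℕ) < min (j:ℕ) s then (i:ℕ) else (i:ℕ) + s) < 2*s := by
      intro i; have := i.isLt; split <;> omega
    set g : Fin s → Fin (2*s) := fun i =>
      ⟨if (i:ℕ) < min (j:ℕ) s then (i:ℕ) else (i:ℕ) + s, hg i⟩ with hg_def
    have hginj : Function.Injective g := by
      intro i i' h
      have h' : (if (i:ℕ) < min (j:ℕ) s then (i:ℕ) else (i:ℕ) + s)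
          = (if (i':ℕ) < min (j:ℕ) s then (i':ℕ) else (i':ℕ) + s) := congrArg Fin.val h
      have hi := i.isLt
      have hi' := i'.isLt
      have : (i:ℕ) = (i':ℕ) := by split_ifs at h' <;> omega
      exact Fin.ext this
    refine ⟨Finset.image g Finset.univ, ⟨?_, ?_⟩, ?_⟩
    · -- is clique
      intro x hx y hy hxy
      simp only [Finset.coe_image, Set.mem_image, Finset.coe_univ, Set.image_univ,
        Set.mem_range] at hx hy
      obtain ⟨i, rfl⟩ := hx
      obtain ⟨i', rfl⟩ := hy
      have hii' : (i:ℕ) ≠ (i':ℕ) := by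
        intro h; exact hxy (congrArg g (Fin.ext h))
      rw [UG_adj]
      have hi := i.isLt
      have hi' := i'.isLt
      constructor
      · show (if (i:ℕ) < min (j:ℕ) s then (i:ℕ) else (i:ℕ) + s)
          ≠ (if (i':ℕ) < min (j:ℕ) s then (i':ℕ) else (i':ℕ) + s)
        split_ifs <;> omega
      · show _ ∨ _ ∨ _ ∨ _
        simp only [hg_def]
        split_ifs <;> omega
    · -- card
      rw [Finset.card_image_of_injective _ hginj]
      simp [hs_def]
    · -- avoids part j
      intro v hv
      simp only [Finset.mem_image, Finset.mem_univ, true_and] at hv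
      obtain ⟨i, rfl⟩ := hv
      simp only [Finset.mem_singleton]
      intro heq
      have heq' := congrArg Fin.val heq
      simp only [hg_def] at heq'
      have hi := i.isLt
      split_ifs at heq' <;> omega

lemma beta_lower {k r n : ℕ} (hr : 2 ≤ r) (hk : 1 ≤ k)
    (h : BetaWitness 1 k r n) : 2 * (r - 1) ≤ n := by
  obtain ⟨G, P, _, hG, hprop⟩ := h
  have hcl : ∀ j : Fin k, ∃ T, G.IsNClique (r-1) T ∧ ∀ v ∈ T, P v ≠ j := by
    intro j
    obtain ⟨T, hT, hTP⟩ := hprop {j} (Finset.card_singleton j)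
    exact ⟨T, hT, fun v hv => by simpa using hTP v hv⟩
  by_contra hn
  push_neg at hn
  obtain ⟨T, hT, -⟩ := hcl ⟨0, hk⟩
  have hTcard : T.card = r - 1 := hT.2
  have hcompl : Tᶜ.card = n - (r-1) := by
    rw [Finset.card_compl, hTcard, Fintype.card_fin]
  refine key_lemma (by omega) G P hG hcl (Tᶜ.card) T Tᶜ ?_ hT.1
    disjoint_compl_right le_rfl (by omega) ?_
  · apply Finset.card_pos.mp; omega
  · intro a ha w hw hwa
    have hwT : w ∈ T := by simpa using hw
    exact hT.1 ha hwT (Ne.symm hwa)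

theorem stmt_7 (k r : ℕ) (hr : 2 ≤ r) (hkr : r ≤ k) :
    beta 1 k r = 2 * (r - 1) := by
  have hub := beta_upper hr hkr
  refine le_antisymm (Nat.sInf_le hub) ?_
  exact le_csInf ⟨_, hub⟩ (fun n hn => beta_lower hr (by omega) hn)
end

section
/- For integers k ≥ r ≥ 2 and 2 ≤ i ≤ k - r + 1, β_i(k, r) ≥ β_{i-1}(k-1, r) + 1. -/
open SimpleGraph

-- nonemptiness construction
lemma beta_nonempty (i k r : ℕ) (hr : 2 ≤ r) (hik : i + (r - 1) ≤ k) :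
    BetaWitness i k r (k * (r - 1)) := by
  classical
  let e : Fin (k * (r - 1)) ≃ Fin k × Fin (r - 1) := finProdFinEquiv.symm
  refine ⟨{ Adj := fun a b => (e a).1 ≠ (e b).1 ∧ (e a).2 ≠ (e b).2,
            symm := ⟨by intro a b h; exact ⟨h.1.symm, h.2.symm⟩⟩,
            loopless := ⟨by intro a h; exact h.1 rfl⟩ },
          fun a => (e a).1, ?_, ?_, ?_⟩
  · intro u v h; exact h.1
  · intro T hT
    have hinj : Set.InjOn (fun a => (e a).2) T := by
      intro a ha b hb hab
      by_contra hne
      exact (hT.1 ha hb hne).2 hab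
    have hle := Finset.card_le_card_of_injOn (fun a => (e a).2)
      (fun a _ => Finset.mem_univ _) hinj
    rw [hT.2, Finset.card_univ, Fintype.card_fin] at hle
    omega
  · intro S hS
    have hc : r - 1 ≤ Sᶜ.card := by
      rw [Finset.card_compl, Fintype.card_fin, hS]; omega
    obtain ⟨U, hUS, hU⟩ := Finset.exists_subset_card_eq hc
    let f : Fin (r - 1) → Fin k := fun t => (U.orderIsoOfFin hU t : Fin k)
    have hfinj : Function.Injective f := fun a b h => by
      have := (U.orderIsoOfFin hU).injective (Subtype.ext h); exact this
    have hfU : ∀ t, f t ∈ U := fun t => (U.orderIsoOfFin hU t).2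
    refine ⟨Finset.univ.image (fun t => e.symm (f t, t)), ⟨?_, ?_⟩, ?_⟩
    · intro a ha b hb hab
      simp only [Finset.coe_image, Set.mem_image] at ha hb
      obtain ⟨t, -, rfl⟩ := ha
      obtain ⟨s, -, rfl⟩ := hb
      have hts : t ≠ s := fun h => hab (by rw [h])
      constructor <;> simp [e.apply_symm_apply]
      · exact fun h => hts (hfinj h)
      · exact hts
    · rw [Finset.card_image_of_injective, Finset.card_univ, Fintype.card_fin]
      intro a b h
      have := e.symm.injective h
      exact congrArg Prod.snd this
    · intro v hv
      simp only [Finset.mem_image] at hv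
      obtain ⟨t, -, rfl⟩ := hv
      have h1 : (fun a => (e a).1) (e.symm (f t, t)) = f t := by
        simp [e.apply_symm_apply]
      rw [h1]
      have := hUS (hfU t)
      simpa using this

lemma beta_step (i l r m : ℕ) (hl : 1 ≤ l) (hi : 1 ≤ i)
    (h : BetaWitness i (l + 1) r (m + 1)) : BetaWitness (i - 1) l r m := by
  classical
  obtain ⟨G, P, hP, hfree, hcl⟩ := h
  set v0 : Fin (m + 1) := 0 with hv0
  set p : Fin (l + 1) := P v0 with hp
  set f : Fin m → Fin (m + 1) := v0.succAbove with hf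
  have hfinj : Function.Injective f := Fin.succAbove_right_injective
  set g : Fin l → Fin (l + 1) := p.succAbove with hg
  have hginj : Function.Injective g := Fin.succAbove_right_injective
  refine ⟨{ Adj := fun a b => G.Adj (f a) (f b) ∧ P (f a) ≠ p ∧ P (f b) ≠ p,
            symm := ⟨by intro a b h; exact ⟨h.1.symm, h.2.2, h.2.1⟩⟩,
            loopless := ⟨by intro a h; exact G.loopless.irrefl _ h.1⟩ },
          fun a => if ha : P (f a) = p then ⟨0, hl⟩
            else Classical.choose (Fin.exists_succAbove_eq ha), ?_, ?_, ?_⟩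
  · intro u v huv
    simp only [huv.2.1, huv.2.2, dif_neg, not_false_iff]
    intro heq
    have h1 := Classical.choose_spec (Fin.exists_succAbove_eq huv.2.1)
    have h2 := Classical.choose_spec (Fin.exists_succAbove_eq huv.2.2)
    rw [heq] at h1
    exact hP _ _ huv.1 (h1.symm.trans h2)
  · intro T' hT'
    apply hfree (T'.image f)
    constructor
    · intro x hx y hy hxy
      simp only [Finset.coe_image, Set.mem_image] at hx hy
      obtain ⟨a, ha, rfl⟩ := hx
      obtain ⟨b, hb, rfl⟩ := hy
      have hab : a ≠ b := fun h => hxy (by rw [h])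
      exact (hT'.1 ha hb hab).1
    · rw [Finset.card_image_of_injective _ hfinj, hT'.2]
  · intro S' hS'
    have hpnot : p ∉ S'.image g := by
      simp only [Finset.mem_image]
      rintro ⟨z, -, hz⟩
      exact Fin.succAbove_ne p z hz
    obtain ⟨T, hT, hTS⟩ := hcl (insert p (S'.image g)) (by
      rw [Finset.card_insert_of_notMem hpnot,
        Finset.card_image_of_injective _ hginj, hS']
      omega)
    have hTne : ∀ v ∈ T, P v ≠ p ∧ v ≠ v0 := by
      intro v hv
      have h1 : P v ≠ p := fun h => hTS v hv (by rw [h]; exact Finset.mem_insert_self _ _)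
      exact ⟨h1, fun h => h1 (by rw [h])⟩
    refine ⟨Finset.univ.filter (fun a => f a ∈ T), ⟨?_, ?_⟩, ?_⟩
    · intro a ha b hb hab
      simp only [Finset.coe_filter, Set.mem_setOf_eq] at ha hb
      have h1 : f a ≠ f b := fun h => hab (hfinj h)
      exact ⟨hT.1 ha.2 hb.2 h1, (hTne _ ha.2).1, (hTne _ hb.2).1⟩
    · rw [← hT.2]
      apply Finset.card_bij (fun a _ => f a)
      · intro a ha
        exact (Finset.mem_filter.mp ha).2
      · intro a _ b _ hab
        exact hfinj hab
      · intro v hv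
        obtain ⟨a, ha⟩ := Fin.exists_succAbove_eq (hTne v hv).2
        refine ⟨a, Finset.mem_filter.mpr ⟨Finset.mem_univ _, ?_⟩, ha⟩
        show f a ∈ T
        rw [hf, ha]; exact hv
    · intro a ha
      have haT : f a ∈ T := (Finset.mem_filter.mp ha).2
      have h1 : P (f a) ≠ p := (hTne _ haT).1
      simp only [h1, dif_neg, not_false_iff]
      intro hmem
      have h2 := Classical.choose_spec (Fin.exists_succAbove_eq h1)
      apply hTS _ haT
      apply Finset.mem_insert_of_mem
      rw [← h2]
      exact Finset.mem_image_of_mem _ hmem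

theorem stmt_9 (k r i : ℕ) (hr : 2 ≤ r) (hkr : r ≤ k) (hi1 : 2 ≤ i) (hi2 : i ≤ k - r + 1) :
    beta (i - 1) (k - 1) r + 1 ≤ beta i k r := by
  have hne : {n | BetaWitness i k r n}.Nonempty :=
    ⟨k * (r - 1), beta_nonempty i k r hr (by omega)⟩
  have hmem : beta i k r ∈ {n | BetaWitness i k r n} := Nat.sInf_mem hne
  set n := beta i k r with hn
  have hwit : BetaWitness i k r n := hmem
  have hn1 : 1 ≤ n := by
    obtain ⟨G, P, -, -, hcl⟩ := hwit
    obtain ⟨S, -, hS⟩ := Finset.exists_subset_card_eq (s := (Finset.univ : Finset (Fin k))) (n := i)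
      (by simp only [Finset.card_univ, Fintype.card_fin]; omega)
    obtain ⟨T, hT, -⟩ := hcl S hS
    have hTne : T.Nonempty := by
      rw [← Finset.card_pos, hT.2]; omega
    obtain ⟨v, -⟩ := hTne
    exact v.pos
  have hk1 : k = (k - 1) + 1 := by omega
  have hn2 : n = (n - 1) + 1 := by omega
  have hw2 : BetaWitness i ((k - 1) + 1) r ((n - 1) + 1) := by
    rw [← hk1, ← hn2]; exact hwit
  have hstep := beta_step i (k - 1) r (n - 1) (by omega) (by omega) hw2
  have hle : beta (i - 1) (k - 1) r ≤ n - 1 := Nat.sInf_le hstep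
  omega
end

section
/- For all integers k ≥ r ≥ 3, k · β_1(k-1, r-1) ≤ α(k, r) ≤ (k-1) · β_2(k, r-1). -/
open SimpleGraph

/-- A `k`-partite graph with partition map `P` is `K_r`-partite-saturated. -/
def PartiteSaturated {V : Type} (k r : ℕ) (G : SimpleGraph V) (P : V → Fin k) : Prop :=
  (∀ u v, G.Adj u v → P u ≠ P v) ∧ G.CliqueFree r ∧
  ∀ u v, P u ≠ P v → ¬ G.Adj u v →
    ¬ (G ⊔ SimpleGraph.fromEdgeSet {s(u, v)}).CliqueFree r

/-- `m` is the number of edges between an independent transversal `X` and its complement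
in a `K_r`-partite-saturated `k`-partite graph. -/
def AlphaWitness (k r m : ℕ) : Prop :=
  ∃ (n : ℕ) (G : SimpleGraph (Fin n)) (P : Fin n → Fin k) (x : Fin k → Fin n),
    PartiteSaturated k r G P ∧ (∀ i, P (x i) = i) ∧
    (∀ i j, ¬ G.Adj (x i) (x j)) ∧
    m = ∑ i : Fin k, (G.neighborSet (x i)).ncard

noncomputable def alpha (k r : ℕ) : ℕ := sInf {m | AlphaWitness k r m}


/-- If `G` is `K_r`-free but `G` plus edge `uv` is not, there is an `r`-clique containing
both `u` and `v`. -/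
lemma clique_new_edge {V : Type} {G : SimpleGraph V} {u v : V} {r : ℕ} (hG : G.CliqueFree r)
    (h : ¬ (G ⊔ SimpleGraph.fromEdgeSet {s(u, v)}).CliqueFree r) :
    ∃ T : Finset V, (G ⊔ SimpleGraph.fromEdgeSet {s(u, v)}).IsNClique r T ∧ u ∈ T ∧ v ∈ T := by
  rw [SimpleGraph.CliqueFree] at h
  push_neg at h
  obtain ⟨T, hT⟩ := h
  refine ⟨T, hT, ?_⟩
  by_contra hc
  refine hG T ⟨?_, hT.2⟩
  intro a ha b hb hab
  have := hT.1 ha hb hab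
  rw [sup_adj] at this
  rcases this with hg | he
  · exact hg
  · rw [fromEdgeSet_adj, Set.mem_singleton_iff, Sym2.eq_iff] at he
    exfalso
    apply hc
    rcases he.1 with ⟨rfl, rfl⟩ | ⟨rfl, rfl⟩
    · exact ⟨ha, hb⟩
    · exact ⟨hb, ha⟩

/-- Transfer a beta-witness graph on an arbitrary finite vertex type to `Fin (card V)`. -/
lemma betaWitness_of_graph {i k r : ℕ} {V : Type} [Fintype V] (G : SimpleGraph V)
    (P : V → Fin k)
    (hP : ∀ u v, G.Adj u v → P u ≠ P v) (hF : G.CliqueFree r)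
    (hC : ∀ S : Finset (Fin k), S.card = i →
      ∃ T : Finset V, G.IsNClique (r - 1) T ∧ ∀ v ∈ T, P v ∉ S) :
    BetaWitness i k r (Fintype.card V) := by
  classical
  let e : V ≃ Fin (Fintype.card V) := Fintype.equivFin V
  refine ⟨SimpleGraph.comap (⇑e.symm) G, P ∘ e.symm, ?_, ?_, ?_⟩
  · intro a b hab
    exact hP _ _ hab
  · have : SimpleGraph.comap (⇑e.symm) G = SimpleGraph.comap (⇑e.symm.toEmbedding) G := rfl
    rw [this]
    exact hF.comap ⟨(SimpleGraph.Iso.comap e.symm G).toEmbedding.toCopy⟩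
  · intro S hS
    obtain ⟨T, hT, hTS⟩ := hC S hS
    refine ⟨T.map e.toEmbedding, ⟨?_, by simp [hT.2]⟩, ?_⟩
    · intro a ha b hb hab
      simp only [Finset.mem_map, Finset.mem_coe] at ha hb
      obtain ⟨a', ha', rfl⟩ := ha
      obtain ⟨b', hb', rfl⟩ := hb
      have : a' ≠ b' := fun h => hab (by rw [h])
      have := hT.1 ha' hb' this
      simpa using this
    · intro w hw
      simp only [Finset.mem_map] at hw
      obtain ⟨t, ht, rfl⟩ := hw
      simpa using hTS t ht
/-- The beta set for `i = 2`, `k` parts, clique size `r-1` is nonempty when `3 ≤ r ≤ k`. -/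
lemma betaSet_nonempty (k r : ℕ) (hr : 3 ≤ r) (hkr : r ≤ k) :
    {n | BetaWitness 2 k (r - 1) n}.Nonempty := by
  classical
  -- vertex type: a pair of parts to avoid, together with an index in `Fin (r-3+1... )`
  let V : Type := {s : Finset (Fin k) // s.card = 2} × Fin (r - 3 + 1)
  have hcompl : ∀ s : {s : Finset (Fin k) // s.card = 2}, (s.1ᶜ : Finset (Fin k)).card = k - 2 := by
    intro s
    rw [Finset.card_compl, s.2, Fintype.card_fin]
  have hle : r - 3 + 1 ≤ k - 2 := by omega
  let f : {s : Finset (Fin k) // s.card = 2} → Fin (r - 3 + 1) → Fin k :=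
    fun s a => (s.1ᶜ : Finset (Fin k)).orderEmbOfFin (hcompl s) (Fin.castLE hle a)
  have hfmem : ∀ s a, f s a ∈ s.1ᶜ := fun s a =>
    Finset.orderEmbOfFin_mem _ _ _
  have hfinj : ∀ s, Function.Injective (f s) := by
    intro s a b hab
    have := (s.1ᶜ.orderEmbOfFin (hcompl s)).injective hab
    exact Fin.castLE_injective hle this
  let G : SimpleGraph V := SimpleGraph.fromRel (fun p q => p.1 = q.1 ∧ p.2 ≠ q.2)
  have hadj : ∀ p q : V, G.Adj p q ↔ p ≠ q ∧ p.1 = q.1 ∧ p.2 ≠ q.2 := by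
    intro p q
    simp only [G, SimpleGraph.fromRel_adj]
    constructor
    · rintro ⟨h1, (⟨h2, h3⟩ | ⟨h2, h3⟩)⟩
      · exact ⟨h1, h2, h3⟩
      · exact ⟨h1, h2.symm, h3.symm⟩
    · rintro ⟨h1, h2, h3⟩
      exact ⟨h1, Or.inl ⟨h2, h3⟩⟩
  refine ⟨Fintype.card V, betaWitness_of_graph G (fun p => f p.1 p.2) ?_ ?_ ?_⟩
  · intro u v huv
    rw [hadj] at huv
    obtain ⟨-, h1, h2⟩ := huv
    show f u.1 u.2 ≠ f v.1 v.2
    rw [h1]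
    exact fun h => h2 (hfinj v.1 h)
  · intro T hT
    have hcard : T.card = r - 1 := hT.2
    -- all elements share the same first component, with distinct second components
    have : T.card ≤ r - 3 + 1 := by
      have hinj : Set.InjOn (fun p : V => p.2) T := by
        intro a ha b hb hab
        by_contra hne
        have := hT.1 ha hb hne
        rw [hadj] at this
        exact this.2.2 hab
      have h1 := Finset.card_le_univ (T.image (fun p : V => p.2))
      rw [Finset.card_image_of_injOn hinj] at h1
      simpa using h1
    omega
  · intro S hS
    have hfS : ∀ a, f ⟨S, hS⟩ a ∉ S := by
      intro a
      have := hfmem ⟨S, hS⟩ a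
      simpa using this
    refine ⟨(Finset.univ : Finset (Fin (r - 3 + 1))).map
      ⟨fun a => ((⟨S, hS⟩ : {s : Finset (Fin k) // s.card = 2}), a), by
        intro a b hab; exact (Prod.ext_iff.mp hab).2⟩, ⟨?_, ?_⟩, ?_⟩
    · intro p hp q hq hpq
      simp only [Finset.coe_map, Set.mem_image, Finset.mem_coe] at hp hq
      obtain ⟨a, -, rfl⟩ := hp
      obtain ⟨b, -, rfl⟩ := hq
      rw [hadj]
      refine ⟨hpq, rfl, ?_⟩
      simpa using fun h => hpq (by rw [show a = b from h])
    · simp only [Finset.card_map, Finset.card_univ, Fintype.card_fin]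
      omega
    · intro v hv
      simp only [Finset.mem_map, Function.Embedding.coeFn_mk] at hv
      obtain ⟨a, -, rfl⟩ := hv
      exact hfS a
/-- The sum graph used for the upper bound: `H` together with a transversal vertex for each
part, joined to everything outside that part. -/
def sumGraph {n k : ℕ} (H : SimpleGraph (Fin n)) (Q : Fin n → Fin k) :
    SimpleGraph (Fin n ⊕ Fin k) where
  Adj x y := match x, y with
    | .inl a, .inl b => H.Adj a b
    | .inl a, .inr i => Q a ≠ i
    | .inr i, .inl a => Q a ≠ i
    | .inr _, .inr _ => False
  symm := ⟨by rintro (a | i) (b | j) h <;> simp_all <;> exact h.symm⟩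
  loopless := ⟨by rintro (a | i) h <;> simp_all⟩

@[simp] lemma sumGraph_adj_ll {n k : ℕ} (H : SimpleGraph (Fin n)) (Q : Fin n → Fin k)
    (a b : Fin n) : (sumGraph H Q).Adj (.inl a) (.inl b) ↔ H.Adj a b := Iff.rfl
@[simp] lemma sumGraph_adj_lr {n k : ℕ} (H : SimpleGraph (Fin n)) (Q : Fin n → Fin k)
    (a : Fin n) (i : Fin k) : (sumGraph H Q).Adj (.inl a) (.inr i) ↔ Q a ≠ i := Iff.rfl
@[simp] lemma sumGraph_adj_rl {n k : ℕ} (H : SimpleGraph (Fin n)) (Q : Fin n → Fin k)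
    (a : Fin n) (i : Fin k) : (sumGraph H Q).Adj (.inr i) (.inl a) ↔ Q a ≠ i := Iff.rfl
@[simp] lemma sumGraph_adj_rr {n k : ℕ} (H : SimpleGraph (Fin n)) (Q : Fin n → Fin k)
    (i j : Fin k) : (sumGraph H Q).Adj (.inr i) (.inr j) ↔ False := Iff.rfl

lemma sumGraph_cliqueFree {n k r : ℕ} (H : SimpleGraph (Fin n)) (Q : Fin n → Fin k)
    (hr : 1 ≤ r) (hH : H.CliqueFree (r - 1)) : (sumGraph H Q).CliqueFree r := by
  classical
  intro T hT
  have hR : T.toRight.card ≤ 1 := by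
    by_contra hc
    push_neg at hc
    obtain ⟨a, ha, b, hb, hab⟩ := Finset.one_lt_card.mp hc
    rw [Finset.mem_toRight] at ha hb
    exact hT.1 ha hb (by simpa using hab)
  have hL : r - 1 ≤ T.toLeft.card := by
    have := Finset.card_toLeft_add_card_toRight (u := T)
    rw [hT.2] at this
    omega
  obtain ⟨C, hCsub, hCcard⟩ := Finset.exists_subset_card_eq hL
  refine hH C ⟨?_, hCcard⟩
  intro a ha b hb hab
  have ha' := Finset.mem_toLeft.mp (hCsub ha)
  have hb' := Finset.mem_toLeft.mp (hCsub hb)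
  exact hT.1 ha' hb' (by simpa using hab)

lemma alphaWitness_of_beta {k r n : ℕ} (hr : 3 ≤ r) (hkr : r ≤ k)
    (h : BetaWitness 2 k (r - 1) n) : AlphaWitness k r ((k - 1) * n) := by
  classical
  obtain ⟨H0, Q, hQ0, hF0, hC0⟩ := h
  -- pass to a maximal `K_{r-1}`-free `k`-partite supergraph of `H0`
  obtain ⟨H, hHS, hHmax⟩ := Set.Finite.exists_maximalFor id
    {G' : SimpleGraph (Fin n) | H0 ≤ G' ∧ (∀ u v, G'.Adj u v → Q u ≠ Q v) ∧ G'.CliqueFree (r - 1)}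
    (Set.toFinite _) ⟨H0, le_refl _, hQ0, hF0⟩
  obtain ⟨hH0le, hQ, hF⟩ := hHS
  have hC : ∀ S : Finset (Fin k), S.card = 2 →
      ∃ T : Finset (Fin n), H.IsNClique (r - 1 - 1) T ∧ ∀ v ∈ T, Q v ∉ S := by
    intro S hS
    obtain ⟨T, hT, hTS⟩ := hC0 S hS
    exact ⟨T, ⟨hT.1.mono hH0le, hT.2⟩, hTS⟩
  -- saturation of `H` within the class
  have hsat : ∀ a b : Fin n, Q a ≠ Q b → ¬ H.Adj a b →
      ¬ (H ⊔ SimpleGraph.fromEdgeSet {s(a, b)}).CliqueFree (r - 1) := by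
    intro a b hab hnadj hcf
    have hne : a ≠ b := fun h => hab (by rw [h])
    have hle : H ≤ H ⊔ SimpleGraph.fromEdgeSet {s(a, b)} := le_sup_left
    have hmem : H ⊔ SimpleGraph.fromEdgeSet {s(a, b)} ∈
        {G' : SimpleGraph (Fin n) | H0 ≤ G' ∧ (∀ u v, G'.Adj u v → Q u ≠ Q v) ∧
          G'.CliqueFree (r - 1)} := by
      refine ⟨le_trans hH0le hle, ?_, hcf⟩
      intro u v huv
      rw [sup_adj] at huv
      rcases huv with hg | he
      · exact hQ u v hg
      · rw [SimpleGraph.fromEdgeSet_adj, Set.mem_singleton_iff, Sym2.eq_iff] at he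
        rcases he.1 with ⟨rfl, rfl⟩ | ⟨rfl, rfl⟩
        · exact hab
        · exact hab.symm
    have : id H = id (H ⊔ SimpleGraph.fromEdgeSet {s(a, b)}) := le_antisymm hle (hHmax hmem hle)
    simp only [id] at this
    apply hnadj
    rw [this, sup_adj]
    right
    rw [SimpleGraph.fromEdgeSet_adj]
    exact ⟨by simp, hne⟩
  -- the graph for the alpha-witness
  set G : SimpleGraph (Fin n ⊕ Fin k) := sumGraph H Q with hGdef
  set Ps : Fin n ⊕ Fin k → Fin k := Sum.elim Q id with hPdef
  have hGpart : ∀ u v, G.Adj u v → Ps u ≠ Ps v := by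
    rintro (a | i) (b | j) huv
    · exact hQ a b huv
    · exact huv
    · exact fun h => huv h.symm
    · exact huv.elim
  have hGfree : G.CliqueFree r := sumGraph_cliqueFree H Q (by omega) hF
  -- saturation of `G`
  have hGsat : ∀ u v, Ps u ≠ Ps v → ¬ G.Adj u v →
      ¬ (G ⊔ SimpleGraph.fromEdgeSet {s(u, v)}).CliqueFree r := by
    rintro (a | i) (b | j) hPuv hnadj hcf
    · -- inl-inl
      have hab : Q a ≠ Q b := by simpa [hPdef] using hPuv
      have hnadj' : ¬ H.Adj a b := by simpa [hGdef] using hnadj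
      obtain ⟨C, hC1, haC, hbC⟩ := clique_new_edge hF (hsat a b hab hnadj')
      -- find a part not used by `C`
      have himg : (C.image Q).card < k := by
        calc (C.image Q).card ≤ C.card := Finset.card_image_le
          _ = r - 1 := hC1.2
          _ < k := by omega
      obtain ⟨i, hi⟩ : ∃ i, i ∉ C.image Q := by
        by_contra hc
        push_neg at hc
        have := Finset.eq_univ_iff_forall.mpr hc
        rw [this, Finset.card_univ, Fintype.card_fin] at himg
        omega
      -- build the r-clique
      refine hcf (insert (Sum.inr i) (C.map ⟨Sum.inl, Sum.inl_injective⟩)) ?_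
      have hmapQ : ∀ w ∈ C.map ⟨Sum.inl, Sum.inl_injective⟩, ∃ c ∈ C, w = (Sum.inl c : Fin n ⊕ Fin k) := by
        intro w hw
        obtain ⟨c, hc, rfl⟩ := Finset.mem_map.mp hw
        exact ⟨c, hc, rfl⟩
      have hclique : (G ⊔ SimpleGraph.fromEdgeSet {s(Sum.inl a, Sum.inl b)}).IsNClique (r - 1)
          (C.map ⟨Sum.inl, Sum.inl_injective⟩) := by
        constructor
        · intro w hw w' hw' hne
          obtain ⟨c, hc, rfl⟩ := hmapQ w (by simpa using hw)
          obtain ⟨c', hc', rfl⟩ := hmapQ w' (by simpa using hw')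
          have hcc : c ≠ c' := fun h => hne (by rw [h])
          have := hC1.1 hc hc' hcc
          rw [sup_adj] at this ⊢
          rcases this with hg | he
          · exact Or.inl (by simpa [hGdef] using hg)
          · rw [SimpleGraph.fromEdgeSet_adj, Set.mem_singleton_iff, Sym2.eq_iff] at he
            right
            rw [SimpleGraph.fromEdgeSet_adj, Set.mem_singleton_iff, Sym2.eq_iff]
            constructor
            · rcases he.1 with ⟨rfl, rfl⟩ | ⟨rfl, rfl⟩
              · exact Or.inl ⟨rfl, rfl⟩
              · exact Or.inr ⟨rfl, rfl⟩
            · exact fun hh => he.2 (Sum.inl_injective hh)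
        · rw [Finset.card_map]; exact hC1.2
      have hins := hclique.insert (a := Sum.inr i) ?_
      · have : r - 1 + 1 = r := by omega
        rwa [this] at hins
      · intro w hw
        obtain ⟨c, hc, rfl⟩ := hmapQ w hw
        rw [sup_adj]
        left
        simp only [hGdef, sumGraph_adj_rl]
        exact fun hqc => hi (hqc ▸ Finset.mem_image_of_mem Q hc)
    · -- inl-inr : impossible (already adjacent or same part)
      have : Q a ≠ j := by simpa [hPdef] using hPuv
      exact hnadj (by simpa [hGdef] using this)
    · -- inr-inl
      have : Q b ≠ i := by simpa [hPdef] using hPuv.symm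
      exact hnadj (by simpa [hGdef] using this)
    · -- inr-inr
      have hij : i ≠ j := by simpa [hPdef] using hPuv
      obtain ⟨T, hT, hTS⟩ := hC ({i, j} : Finset (Fin k)) (by
        rw [Finset.card_insert_of_notMem (by simpa using hij), Finset.card_singleton])
      have hTi : ∀ v ∈ T, Q v ≠ i := fun v hv hh =>
        hTS v hv (by simp [hh])
      have hTj : ∀ v ∈ T, Q v ≠ j := fun v hv hh =>
        hTS v hv (by simp [hh])
      refine hcf (insert (Sum.inr i) (insert (Sum.inr j)
        (T.map ⟨Sum.inl, Sum.inl_injective⟩))) ?_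
      have hclique0 : (G ⊔ SimpleGraph.fromEdgeSet {s(Sum.inr i, Sum.inr j)}).IsNClique (r - 1 - 1)
          (T.map ⟨Sum.inl, Sum.inl_injective⟩) := by
        constructor
        · intro w hw w' hw' hne
          simp only [Finset.coe_map, Set.mem_image, Finset.mem_coe] at hw hw'
          obtain ⟨c, hc, rfl⟩ := hw
          obtain ⟨c', hc', rfl⟩ := hw'
          have hcc : c ≠ c' := fun h => hne (by rw [h])
          rw [sup_adj]
          left
          simpa [hGdef] using hT.1 hc hc' hcc
        · rw [Finset.card_map]; exact hT.2
      have hclique1 := hclique0.insert (a := Sum.inr j) ?_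
      · have hclique2 := hclique1.insert (a := Sum.inr i) ?_
        · have e1 : r - 1 - 1 + 1 + 1 = r := by omega
          rwa [e1] at hclique2
        · intro w hw
          rw [Finset.mem_insert] at hw
          rcases hw with rfl | hw
          · rw [sup_adj]
            right
            rw [SimpleGraph.fromEdgeSet_adj]
            exact ⟨by simp, by simpa using hij⟩
          · obtain ⟨c, hc, rfl⟩ := Finset.mem_map.mp hw
            rw [sup_adj]
            left
            simpa [hGdef] using hTi c hc
      · intro w hw
        obtain ⟨c, hc, rfl⟩ := Finset.mem_map.mp hw
        rw [sup_adj]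
        left
        simpa [hGdef] using hTj c hc
  -- transport to `Fin (n + k)`
  let e : Fin n ⊕ Fin k ≃ Fin (n + k) := finSumFinEquiv
  refine ⟨n + k, SimpleGraph.comap (⇑e.symm) G, Ps ∘ e.symm, fun i => e (Sum.inr i),
    ⟨?_, ?_, ?_⟩, ?_, ?_, ?_⟩
  · intro u v huv
    exact hGpart _ _ huv
  · have : SimpleGraph.comap (⇑e.symm) G = SimpleGraph.comap (⇑e.symm.toEmbedding) G := rfl
    rw [this]
    exact hGfree.comap ⟨(SimpleGraph.Iso.comap e.symm G).toEmbedding.toCopy⟩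
  · intro u v hPuv hnadj
    have hkey : SimpleGraph.comap (⇑e.symm) G ⊔ SimpleGraph.fromEdgeSet {s(u, v)} =
        SimpleGraph.comap (⇑e.symm) (G ⊔ SimpleGraph.fromEdgeSet {s(e.symm u, e.symm v)}) := by
      ext x y
      simp only [sup_adj, SimpleGraph.comap_adj, SimpleGraph.fromEdgeSet_adj,
        Set.mem_singleton_iff, Sym2.eq_iff]
      constructor
      · rintro (hg | ⟨(⟨rfl, rfl⟩ | ⟨rfl, rfl⟩), hne⟩)
        · exact Or.inl hg
        · exact Or.inr ⟨Or.inl ⟨rfl, rfl⟩, fun hh => hne (e.symm.injective hh)⟩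
        · exact Or.inr ⟨Or.inr ⟨rfl, rfl⟩, fun hh => hne (e.symm.injective hh)⟩
      · rintro (hg | ⟨(⟨h1, h2⟩ | ⟨h1, h2⟩), hne⟩)
        · exact Or.inl hg
        · exact Or.inr ⟨Or.inl ⟨e.symm.injective h1, e.symm.injective h2⟩,
            fun hh => hne (by rw [hh])⟩
        · exact Or.inr ⟨Or.inr ⟨e.symm.injective h1, e.symm.injective h2⟩,
            fun hh => hne (by rw [hh])⟩
    rw [hkey]
    intro hcf
    have hsat' := hGsat (e.symm u) (e.symm v) hPuv hnadj
    apply hsat'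
    have : SimpleGraph.comap (⇑e.symm) (G ⊔ SimpleGraph.fromEdgeSet {s(e.symm u, e.symm v)}) =
        SimpleGraph.comap (⇑e.symm.toEmbedding) (G ⊔ SimpleGraph.fromEdgeSet
          {s(e.symm u, e.symm v)}) := rfl
    rw [this] at hcf
    exact hcf.comap
      ⟨(SimpleGraph.Iso.comap e.symm (G ⊔ SimpleGraph.fromEdgeSet
        {s(e.symm u, e.symm v)})).symm.toEmbedding.toCopy⟩
  · intro i
    simp [hPdef]
  · intro i j
    simp only [SimpleGraph.comap_adj, Equiv.symm_apply_apply]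
    exact fun h => h
  · -- count the edges
    have hnbhd : ∀ i : Fin k,
        (SimpleGraph.comap (⇑e.symm) G).neighborSet (e (Sum.inr i)) =
          ↑((Finset.univ.filter (fun v : Fin n => Q v ≠ i)).image (fun v => e (Sum.inl v))) := by
      intro i
      ext y
      simp only [SimpleGraph.mem_neighborSet, SimpleGraph.comap_adj, Equiv.symm_apply_apply,
        Finset.coe_image, Set.mem_image, Finset.mem_coe, Finset.mem_filter, Finset.mem_univ,
        true_and]
      constructor
      · intro hadj
        rcases hy : e.symm y with a | j
        · refine ⟨a, ?_, ?_⟩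
          · rw [hy] at hadj
            exact hadj
          · rw [← hy, Equiv.apply_symm_apply]
        · rw [hy] at hadj
          exact hadj.elim
      · rintro ⟨a, ha, rfl⟩
        simpa [hGdef] using ha
    have hinj : Function.Injective (fun v : Fin n => e (Sum.inl v)) :=
      fun a b hab => Sum.inl_injective (e.injective hab)
    have hcard : ∀ i : Fin k,
        ((SimpleGraph.comap (⇑e.symm) G).neighborSet (e (Sum.inr i))).ncard =
          (Finset.univ.filter (fun v : Fin n => Q v ≠ i)).card := by
      intro i
      rw [hnbhd i, Set.ncard_coe_finset, Finset.card_image_of_injective _ hinj]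
    rw [Finset.sum_congr rfl (fun i _ => hcard i)]
    have hswap : ∑ i : Fin k, (Finset.univ.filter (fun v : Fin n => Q v ≠ i)).card =
        ∑ v : Fin n, (Finset.univ.filter (fun i : Fin k => Q v ≠ i)).card := by
      simp only [Finset.card_filter]
      exact Finset.sum_comm
    rw [hswap]
    have hone : ∀ v : Fin n, (Finset.univ.filter (fun i : Fin k => Q v ≠ i)).card = k - 1 := by
      intro v
      have : Finset.univ.filter (fun i : Fin k => Q v ≠ i) = Finset.univ.erase (Q v) := by
        ext a
        simp [eq_comm, ne_comm]
      rw [this, Finset.card_erase_of_mem (Finset.mem_univ _), Finset.card_univ, Fintype.card_fin]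
    rw [Finset.sum_congr rfl (fun v _ => hone v), Finset.sum_const, Finset.card_univ,
      Fintype.card_fin, smul_eq_mul, mul_comm]
lemma lower_from_witness {k r m : ℕ} (hr : 3 ≤ r) (hkr : r ≤ k) (h : AlphaWitness k r m) :
    k * beta 1 (k - 1) (r - 1) ≤ m := by
  classical
  obtain ⟨n, G, P, x, ⟨hP, hF, hsat⟩, hx, hindep, hm⟩ := h
  have key : ∀ i0 : Fin k, beta 1 (k - 1) (r - 1) ≤ (G.neighborSet (x i0)).ncard := by
    intro i0
    set N := G.neighborSet (x i0) with hNdef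
    haveI : Fintype ↥N := (Set.toFinite N).fintype
    have hxN : x i0 ∉ N := fun hmem => G.loopless.irrefl _ hmem
    have hNpart : ∀ v : ↥N, P v.1 ≠ i0 := by
      rintro ⟨v, hv⟩
      have : G.Adj (x i0) v := hv
      have := hP _ _ this
      rw [hx] at this
      exact fun hc => this (hc.symm)
    have hcard1 : Fintype.card {j : Fin k // j ≠ i0} = k - 1 := by
      have h1 : Fintype.card {j : Fin k // ¬ j = i0} =
          Fintype.card (Fin k) - Fintype.card {j : Fin k // j = i0} :=
        Fintype.card_subtype_compl _
      rw [Fintype.card_fin, Fintype.card_subtype_eq] at h1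
      exact h1
    let e1 : {j : Fin k // j ≠ i0} ≃ Fin (k - 1) := Fintype.equivFinOfCardEq hcard1
    let P' : ↥N → Fin (k - 1) := fun v => e1 ⟨P v.1, hNpart v⟩
    have hwit : BetaWitness 1 (k - 1) (r - 1) (Fintype.card ↥N) := by
      refine betaWitness_of_graph (SimpleGraph.induce N G) P' ?_ ?_ ?_
      · rintro u v huv
        have hGadj : G.Adj u.1 v.1 := huv
        have hne := hP _ _ hGadj
        intro hc
        apply hne
        have := e1.injective hc
        exact congrArg Subtype.val this
      · intro T hT
        have hclique : G.IsNClique (r - 1) (T.map ⟨Subtype.val, Subtype.val_injective⟩) := by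
          constructor
          · intro a ha b hb hab
            simp only [Finset.coe_map, Set.mem_image, Finset.mem_coe] at ha hb
            obtain ⟨a', ha', rfl⟩ := ha
            obtain ⟨b', hb', rfl⟩ := hb
            have : a' ≠ b' := fun hh => hab (by rw [hh])
            exact hT.1 ha' hb' this
          · rw [Finset.card_map]; exact hT.2
        have hins := hclique.insert (a := x i0) ?_
        · have e2 : r - 1 + 1 = r := by omega
          rw [e2] at hins
          exact hF _ hins
        · intro b hb
          obtain ⟨b', hb', rfl⟩ := Finset.mem_map.mp hb
          exact (b'.2 : G.Adj (x i0) b'.1)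
      · intro S hS
        obtain ⟨j', hj'⟩ := Finset.card_eq_one.mp hS
        set jj : {j : Fin k // j ≠ i0} := e1.symm j' with hjjdef
        set j : Fin k := jj.1 with hjdef
        have hji : j ≠ i0 := jj.2
        have hPne : P (x i0) ≠ P (x j) := by
          rw [hx, hx]
          exact fun hc => hji (hc.symm)
        have hncf := hsat (x i0) (x j) hPne (hindep i0 j)
        obtain ⟨C, hC, hu, hv⟩ := clique_new_edge hF hncf
        have hxne : x i0 ≠ x j := fun hc => hPne (by rw [hc])
        set T0 : Finset (Fin n) := (C.erase (x j)).erase (x i0) with hT0def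
        have hT0mem : ∀ t ∈ T0, t ∈ C ∧ t ≠ x i0 ∧ t ≠ x j := by
          intro t ht
          rw [hT0def, Finset.mem_erase, Finset.mem_erase] at ht
          exact ⟨ht.2.2, ht.1, ht.2.1⟩
        have hT0card : T0.card = r - 1 - 1 := by
          rw [hT0def, Finset.card_erase_of_mem, Finset.card_erase_of_mem hv, hC.2]
          rw [Finset.mem_erase]
          exact ⟨hxne, hu⟩
        have hT0adj : ∀ t ∈ T0, G.Adj t (x i0) ∧ G.Adj t (x j) := by
          intro t ht
          obtain ⟨htC, hti, htj⟩ := hT0mem t ht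
          constructor
          · have := hC.1 htC hu hti
            rw [sup_adj] at this
            rcases this with hg | he
            · exact hg
            · rw [SimpleGraph.fromEdgeSet_adj, Set.mem_singleton_iff, Sym2.eq_iff] at he
              rcases he.1 with ⟨h1, h2⟩ | ⟨h1, h2⟩
              · exact absurd h1 hti
              · exact absurd h1 htj
          · have := hC.1 htC hv htj
            rw [sup_adj] at this
            rcases this with hg | he
            · exact hg
            · rw [SimpleGraph.fromEdgeSet_adj, Set.mem_singleton_iff, Sym2.eq_iff] at he
              rcases he.1 with ⟨h1, h2⟩ | ⟨h1, h2⟩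
              · exact absurd h1 hti
              · exact absurd h1 htj
        have hT0N : ∀ t ∈ T0, t ∈ N := by
          intro t ht
          exact ((hT0adj t ht).1).symm
        refine ⟨T0.attach.map ⟨fun p => (⟨p.1, hT0N p.1 p.2⟩ : ↥N), ?_⟩, ⟨?_, ?_⟩, ?_⟩
        · intro p q hpq
          have h2 : (⟨p.1, hT0N p.1 p.2⟩ : ↥N) = ⟨q.1, hT0N q.1 q.2⟩ := hpq
          have h3 : (⟨p.1, hT0N p.1 p.2⟩ : ↥N).val = (⟨q.1, hT0N q.1 q.2⟩ : ↥N).val :=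
            congrArg Subtype.val h2
          exact Subtype.ext h3
        · intro a ha b hb hab
          simp only [Finset.coe_map, Set.mem_image, Finset.mem_coe, Finset.mem_attach,
            Function.Embedding.coeFn_mk] at ha hb
          obtain ⟨pa, -, rfl⟩ := ha
          obtain ⟨pb, -, rfl⟩ := hb
          have hpab : pa.1 ≠ pb.1 := fun hh => hab (by rw [Subtype.ext hh])
          obtain ⟨haC, hai, haj⟩ := hT0mem pa.1 pa.2
          obtain ⟨hbC, hbi, hbj⟩ := hT0mem pb.1 pb.2
          have := hC.1 haC hbC hpab
          rw [sup_adj] at this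
          rcases this with hg | he
          · exact hg
          · rw [SimpleGraph.fromEdgeSet_adj, Set.mem_singleton_iff, Sym2.eq_iff] at he
            rcases he.1 with ⟨h1, h2⟩ | ⟨h1, h2⟩
            · exact absurd h1 hai
            · exact absurd h1 haj
        · rw [Finset.card_map, Finset.card_attach]
          exact hT0card
        · intro v hv'
          simp only [Finset.mem_map, Finset.mem_attach, Function.Embedding.coeFn_mk,
            true_and] at hv'
          obtain ⟨p, rfl⟩ := hv'
          rw [hj']
          simp only [Finset.mem_singleton]
          intro hc
          have : (⟨P p.1, hNpart ⟨p.1, hT0N p.1 p.2⟩⟩ : {j : Fin k // j ≠ i0}) = e1.symm j' := by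
            rw [← hc]
            exact (e1.symm_apply_apply _).symm
          have hPj : P p.1 = j := congrArg Subtype.val this
          exact ((hT0adj p.1 p.2).2 |> hP _ _) (by rw [hPj, hx])
      -- end of betaWitness_of_graph application
    have hcardN : Fintype.card ↥N = N.ncard := by
      rw [← Nat.card_coe_set_eq, Nat.card_eq_fintype_card]
    rw [← hcardN]
    exact Nat.sInf_le hwit
  calc k * beta 1 (k - 1) (r - 1) = ∑ _i : Fin k, beta 1 (k - 1) (r - 1) := by
        rw [Finset.sum_const, Finset.card_univ, Fintype.card_fin, smul_eq_mul]
    _ ≤ ∑ i : Fin k, (G.neighborSet (x i)).ncard := Finset.sum_le_sum (fun i _ => key i)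
    _ = m := hm.symm
theorem stmt_10 (k r : ℕ) (hr : 3 ≤ r) (hkr : r ≤ k) :
    k * beta 1 (k - 1) (r - 1) ≤ alpha k r ∧ alpha k r ≤ (k - 1) * beta 2 k (r - 1) := by
  have hne : {n | BetaWitness 2 k (r - 1) n}.Nonempty := betaSet_nonempty k r hr hkr
  have hb2 : BetaWitness 2 k (r - 1) (beta 2 k (r - 1)) := Nat.sInf_mem hne
  have haw : AlphaWitness k r ((k - 1) * beta 2 k (r - 1)) := alphaWitness_of_beta hr hkr hb2
  have hupper : alpha k r ≤ (k - 1) * beta 2 k (r - 1) := Nat.sInf_le haw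
  have hain : AlphaWitness k r (alpha k r) := Nat.sInf_mem (s := {m | AlphaWitness k r m}) ⟨_, haw⟩
  exact ⟨lower_from_witness hr hkr hain, hupper⟩
end

section
/- Let k ≥ r ≥ 3, and let G be a k-partite K_r-free graph containing an independent set X consisting of exactly one vertex from each part, such that adding any edge between two distinct vertices of X creates a copy of K_r. Then for each x ∈ X, the subgraph of G induced on the neighborhood N(x) is a K_{r-1}-free (k-1)-partite graph with the property that the subgraph induced by any k-2 of its parts contains a clique of size r-2. In particular, every x ∈ X has degree at least 2r - 4. -/
open SimpleGraph

theorem stmt_11 {V : Type} [Fintype V] (k r : ℕ) (hr : 3 ≤ r) (hkr : r ≤ k)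
    (G : SimpleGraph V) (P : V → Fin k) (x : Fin k → V)
    (hpart : ∀ u v, G.Adj u v → P u ≠ P v)
    (hfree : G.CliqueFree r)
    (hx : ∀ i, P (x i) = i)
    (hind : ∀ i j, ¬ G.Adj (x i) (x j))
    (hsat : ∀ i j : Fin k, i ≠ j →
      ¬ (G ⊔ SimpleGraph.fromEdgeSet {s(x i, x j)}).CliqueFree r) :
    ∀ i : Fin k,
      -- G[N(x i)] is K_{r-1}-free
      (∀ T : Finset V, (∀ v ∈ T, G.Adj (x i) v) → ¬ G.IsNClique (r - 1) T) ∧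
      -- deleting any one of the k-1 parts of G[N(x i)] leaves a clique of size r-2
      (∀ j : Fin k, j ≠ i → ∃ T : Finset V, G.IsNClique (r - 2) T ∧
        (∀ v ∈ T, G.Adj (x i) v) ∧ ∀ v ∈ T, P v ≠ j) ∧
      -- in particular every x i has degree at least 2r - 4
      2 * r - 4 ≤ (G.neighborSet (x i)).ncard := by
  classical
  intro i
  -- any clique has at most r-1 vertices
  have hcard : ∀ S : Finset V, G.IsClique ↑S → S.card ≤ r - 1 := by
    intro S hS
    by_contra h
    push_neg at h
    have hrS : r ≤ S.card := by omega
    obtain ⟨S', hsub, hcardS'⟩ := Finset.exists_subset_card_eq hrS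
    exact hfree S' ⟨hS.subset (by exact_mod_cast hsub), hcardS'⟩
  -- any clique inside N(x i) has at most r-2 vertices
  have hnb : ∀ S : Finset V, G.IsClique ↑S → (∀ v ∈ S, G.Adj (x i) v) → S.card ≤ r - 2 := by
    intro S hS hSn
    have hxi : x i ∉ S := fun h => G.loopless.irrefl _ (hSn _ h)
    have hclq : G.IsClique ↑(insert (x i) S) := by
      rw [Finset.coe_insert]
      exact hS.insert (fun v hv _ => hSn v hv)
    have := hcard _ hclq
    rw [Finset.card_insert_of_notMem hxi] at this
    omega
  -- part 1
  have part1 : ∀ T : Finset V, (∀ v ∈ T, G.Adj (x i) v) → ¬ G.IsNClique (r - 1) T := by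
    intro T hT hcl
    have := hnb T hcl.isClique hT
    have := hcl.card_eq
    omega
  -- part 2
  have part2 : ∀ j : Fin k, j ≠ i → ∃ T : Finset V, G.IsNClique (r - 2) T ∧
      (∀ v ∈ T, G.Adj (x i) v) ∧ ∀ v ∈ T, P v ≠ j := by
    intro j hj
    have hij : i ≠ j := fun h => hj h.symm
    have hsat' := hsat i j hij
    rw [CliqueFree] at hsat'
    push_neg at hsat'
    obtain ⟨S, hS⟩ := hsat'
    have hadj : ∀ u v, (G ⊔ SimpleGraph.fromEdgeSet {s(x i, x j)}).Adj u v →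
        G.Adj u v ∨ ((u = x i ∧ v = x j) ∨ (u = x j ∧ v = x i)) := by
      intro u v h
      rcases h with h | h
      · exact Or.inl h
      · right
        rw [SimpleGraph.fromEdgeSet_adj] at h
        have := h.1
        rw [Set.mem_singleton_iff, Sym2.eq_iff] at this
        exact this
    have hxixj : x i ≠ x j := by
      intro h
      apply hij
      rw [← hx i, ← hx j, h]
    have hmemi : x i ∈ S := by
      by_contra hxiS
      refine hfree S ⟨?_, hS.card_eq⟩
      intro u hu v hv huv
      rcases hadj u v (hS.isClique hu hv huv) with h | ⟨⟨h1, _⟩ | ⟨_, h2⟩⟩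
      · exact h
      · exact absurd (h1 ▸ hu) (by exact_mod_cast hxiS)
      · exact absurd (h2 ▸ hv) (by exact_mod_cast hxiS)
    have hmemj : x j ∈ S := by
      by_contra hxjS
      refine hfree S ⟨?_, hS.card_eq⟩
      intro u hu v hv huv
      rcases hadj u v (hS.isClique hu hv huv) with h | ⟨⟨_, h1⟩ | ⟨h2, _⟩⟩
      · exact h
      · exact absurd (h1 ▸ hv) (by exact_mod_cast hxjS)
      · exact absurd (h2 ▸ hu) (by exact_mod_cast hxjS)
    set T : Finset V := (S.erase (x i)).erase (x j) with hT
    have hmemT : ∀ v, v ∈ T ↔ v ≠ x j ∧ v ≠ x i ∧ v ∈ S := by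
      intro v
      simp [hT, Finset.mem_erase, and_assoc]
    have hTcard : T.card = r - 2 := by
      have h1 : x j ∈ S.erase (x i) := Finset.mem_erase.mpr ⟨hxixj.symm, hmemj⟩
      rw [hT, Finset.card_erase_of_mem h1, Finset.card_erase_of_mem hmemi, hS.card_eq]
      omega
    have hTadj : ∀ v ∈ T, G.Adj (x i) v := by
      intro v hv
      rw [hmemT] at hv
      obtain ⟨hvj, hvi, hvS⟩ := hv
      have := hS.isClique (by exact_mod_cast hmemi) (by exact_mod_cast hvS) (fun h => hvi h.symm)
      rcases hadj _ _ this with h | ⟨⟨_, h1⟩ | ⟨h2, _⟩⟩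
      · exact h
      · exact absurd h1 hvj
      · exact absurd h2 hxixj
    have hTadj' : ∀ v ∈ T, G.Adj (x j) v := by
      intro v hv
      rw [hmemT] at hv
      obtain ⟨hvj, hvi, hvS⟩ := hv
      have := hS.isClique (by exact_mod_cast hmemj) (by exact_mod_cast hvS) (fun h => hvj h.symm)
      rcases hadj _ _ this with h | ⟨⟨h1, _⟩ | ⟨_, h2⟩⟩
      · exact h
      · exact absurd h1.symm hxixj
      · exact absurd h2 hvi
    have hTclq : G.IsClique ↑T := by
      intro u hu v hv huv
      rw [Finset.mem_coe, hmemT] at hu hv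
      have := hS.isClique (by exact_mod_cast hu.2.2) (by exact_mod_cast hv.2.2) huv
      rcases hadj _ _ this with h | ⟨⟨h1, _⟩ | ⟨h1, _⟩⟩
      · exact h
      · exact absurd h1 hu.2.1
      · exact absurd h1 hu.1
    refine ⟨T, ⟨hTclq, hTcard⟩, hTadj, fun v hv => ?_⟩
    have := hpart _ _ (hTadj' v hv)
    rw [hx j] at this
    exact fun h => this (h ▸ rfl)
  refine ⟨part1, part2, ?_⟩
  -- part 3 : Hajnal's lemma argument
  choose! C hC1 hC2 hC3 using part2
  have key : ∀ Q : Finset (Fin k), (∀ q ∈ Q, q ≠ i) →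
      ∃ I U : Finset V, I ⊆ U ∧ (∀ v ∈ U, G.Adj (x i) v) ∧
        (∀ q ∈ Q, I ⊆ C q ∧ C q ⊆ U) ∧
        (∀ v ∈ I, ∀ w ∈ U, v = w ∨ G.Adj v w) ∧
        2 * (r - 2) ≤ I.card + U.card := by
    intro Q
    induction Q using Finset.induction_on with
    | empty =>
      intro _
      have hnt : Nontrivial (Fin k) := by
        have : 2 ≤ k := by omega
        exact Fin.nontrivial_iff_two_le.mpr this
      obtain ⟨j0, hj0⟩ := exists_ne i
      refine ⟨C j0, C j0, subset_rfl, hC2 j0 hj0, by simp, ?_, ?_⟩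
      · intro v hv w hw
        by_cases h : v = w
        · exact Or.inl h
        · exact Or.inr ((hC1 j0 hj0).isClique (by exact_mod_cast hv) (by exact_mod_cast hw) h)
      · rw [(hC1 j0 hj0).card_eq]
        omega
    | @insert a Q ha ih =>
      intro hQ
      obtain ⟨I, U, hIU, hUnb, hQprop, hadjIU, hcardIU⟩ :=
        ih (fun q hq => hQ q (Finset.mem_insert_of_mem hq))
      have hai : a ≠ i := hQ a (Finset.mem_insert_self a Q)
      set Ca := C a with hCa
      have hCaclq := (hC1 a hai).isClique
      have hCacard := (hC1 a hai).card_eq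
      have hCanb := hC2 a hai
      set A : Finset V := I \ Ca with hA
      set X : Finset V := Ca.filter (fun w => ∀ v ∈ A, G.Adj v w) with hX
      -- A ∪ X is a clique in N(x i)
      have hAXclq : G.IsClique ↑(A ∪ X) := by
        intro u hu v hv huv
        rw [Finset.coe_union, Set.mem_union] at hu hv
        rcases hu with hu | hu <;> rcases hv with hv | hv
        · rcases hadjIU u (Finset.sdiff_subset (by exact_mod_cast hu))
            v (hIU (Finset.sdiff_subset (by exact_mod_cast hv))) with h | h
          · exact absurd h huv
          · exact h
        · rw [Finset.mem_coe, hX, Finset.mem_filter] at hv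
          exact hv.2 u (by exact_mod_cast hu)
        · rw [Finset.mem_coe, hX, Finset.mem_filter] at hu
          exact (hu.2 v (by exact_mod_cast hv)).symm
        · rw [Finset.mem_coe, hX, Finset.mem_filter] at hu hv
          exact hCaclq (by exact_mod_cast hu.1) (by exact_mod_cast hv.1) huv
      have hAXnb : ∀ v ∈ A ∪ X, G.Adj (x i) v := by
        intro v hv
        rcases Finset.mem_union.mp hv with hv | hv
        · exact hUnb v (hIU (Finset.sdiff_subset hv))
        · exact hCanb v (Finset.mem_filter.mp hv).1
      have hAXcard : (A ∪ X).card ≤ r - 2 := hnb _ hAXclq hAXnb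
      have hdisj : Disjoint A X := by
        apply Finset.disjoint_left.mpr
        intro v hvA hvX
        exact (Finset.mem_sdiff.mp hvA).2 (Finset.mem_filter.mp hvX).1
      have hsum : A.card + X.card ≤ r - 2 := by
        rw [← Finset.card_union_of_disjoint hdisj]
        exact hAXcard
      -- C a ∩ U ⊆ X
      have hCU : Ca ∩ U ⊆ X := by
        intro w hw
        rw [Finset.mem_inter] at hw
        rw [hX, Finset.mem_filter]
        refine ⟨hw.1, fun v hv => ?_⟩
        rcases hadjIU v (Finset.sdiff_subset hv) w hw.2 with h | h
        · exact absurd (h ▸ hw.1) (Finset.mem_sdiff.mp hv).2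
        · exact h
      have hXle : X.card ≤ Ca.card := Finset.card_le_card (Finset.filter_subset _ _)
      have hCUle : (Ca ∩ U).card ≤ X.card := Finset.card_le_card hCU
      -- card bookkeeping
      have e1 : (I \ Ca).card + (I ∩ Ca).card = I.card := Finset.card_sdiff_add_card_inter I Ca
      have e2 : (Ca \ U).card + U.card = (Ca ∪ U).card := Finset.card_sdiff_add_card Ca U
      have e3 : (Ca ∩ U).card + (Ca \ U).card = Ca.card := Finset.card_inter_add_card_sdiff Ca U
      refine ⟨I ∩ Ca, Ca ∪ U, ?_, ?_, ?_, ?_, ?_⟩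
      · exact (Finset.inter_subset_left).trans (hIU.trans Finset.subset_union_right)
      · intro v hv
        rcases Finset.mem_union.mp hv with hv | hv
        · exact hCanb v hv
        · exact hUnb v hv
      · intro q hq
        rcases Finset.mem_insert.mp hq with hq | hq
        · subst hq
          exact ⟨Finset.inter_subset_right, Finset.subset_union_left⟩
        · exact ⟨Finset.inter_subset_left.trans (hQprop q hq).1,
            (hQprop q hq).2.trans Finset.subset_union_right⟩
      · intro v hv w hw
        rw [Finset.mem_inter] at hv
        rcases Finset.mem_union.mp hw with hw | hw
        · by_cases h : v = w
          · exact Or.inl h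
          · exact Or.inr (hCaclq (by exact_mod_cast hv.2) (by exact_mod_cast hw) h)
        · exact hadjIU v hv.1 w hw
      · have h3 : A.card + (I ∩ Ca).card = I.card := by
          rw [hA]
          omega
        have h6 : Ca.card = r - 2 := hCacard
        omega
  obtain ⟨I, U, hIU, hUnb, hQprop, hadjIU, hcardIU⟩ :=
    key (Finset.univ.erase i) (fun q hq => (Finset.mem_erase.mp hq).1)
  have hIempty : I = ∅ := by
    by_contra h
    obtain ⟨v, hv⟩ := Finset.nonempty_iff_ne_empty.mpr h
    have hvU := hIU hv
    have hadjv := hUnb v hvU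
    have hPv : P v ≠ i := by
      intro h'
      exact hpart (x i) v hadjv (by rw [hx i, h'])
    have hq : P v ∈ Finset.univ.erase i := Finset.mem_erase.mpr ⟨hPv, Finset.mem_univ _⟩
    exact hC3 (P v) hPv v ((hQprop _ hq).1 hv) rfl
  have hUcard : 2 * (r - 2) ≤ U.card := by
    rw [hIempty, Finset.card_empty] at hcardIU
    omega
  have hsub : ↑U ⊆ G.neighborSet (x i) := by
    intro v hv
    exact hUnb v (by exact_mod_cast hv)
  have hle := Set.ncard_le_ncard hsub (Set.toFinite _)
  rw [Set.ncard_coe_finset] at hle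
  omega
end

section
/- Let p ∈ {2, 3} divide r - 2, r ≥ 3, and k = 2r - 4 + p. Define a k-partite graph G on vertices {x_1,...,x_k, y_1,...,y_k} with parts {x_i, y_i}: there are no edges among the x_i; y_i y_j is an edge iff i and j are not consecutive modulo k; and x_i y_j is an edge iff i ≢ j (mod k/p). Then G is K_r-free, every pair x_i, x_j (i ≠ j) has a clique of size r-2 in its common neighborhood, and every non-adjacent pair x_i, y_j in different parts has a clique of size r-2 in its common neighborhood. Moreover each x_i has degree exactly 2r-4. -/
open SimpleGraph
set_option linter.unusedSectionVars false

/-- The relation defining the construction: vertices `(false, i)` are the `x_i`,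
vertices `(true, i)` are the `y_i`; the parts are `{(false, i), (true, i)}`. -/
def ConstrRel (k p : ℕ) : Bool × ZMod k → Bool × ZMod k → Prop
  | (false, i), (true, j) => i.val % (k / p) ≠ j.val % (k / p)
  | (true, i), (true, j) => ¬((i - j = 1) ∨ (j - i = 1))
  | _, _ => False

section Aux

variable {k p : ℕ}

lemma adj_xx (i j : ZMod k) : ¬ (fromRel (ConstrRel k p)).Adj (false, i) (false, j) := by
  simp [fromRel_adj, ConstrRel]

lemma adj_xy (i j : ZMod k) :
    (fromRel (ConstrRel k p)).Adj (false, i) (true, j) ↔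
      i.val % (k / p) ≠ j.val % (k / p) := by
  simp [fromRel_adj, ConstrRel]

lemma adj_yy (i j : ZMod k) :
    (fromRel (ConstrRel k p)).Adj (true, i) (true, j) ↔
      i ≠ j ∧ ¬((i - j = 1) ∨ (j - i = 1)) := by
  simp [fromRel_adj, ConstrRel]
  tauto

variable [NeZero k]

lemma cast_val_eq (x : ZMod k) : ((x.val : ℕ) : ZMod k) = x := by
  simp [ZMod.natCast_val, ZMod.cast_id]

lemma cast_inj_of_lt {m n : ℕ} (hm : m < k) (hn : n < k) (h : (m : ZMod k) = n) : m = n := by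
  have := congrArg ZMod.val h
  rwa [ZMod.val_natCast_of_lt hm, ZMod.val_natCast_of_lt hn] at this

lemma cast_eq_one_iff {n : ℕ} (hn : n < k) (hk : 1 < k) : (n : ZMod k) = 1 ↔ n = 1 := by
  constructor
  · intro h
    have h1 : ((1:ℕ) : ZMod k) = 1 := by norm_num
    exact cast_inj_of_lt hn hk (by rw [h, h1])
  · rintro rfl; norm_num

lemma val_add_cast (i : ZMod k) (o : ℕ) : (i + (o : ZMod k)).val = (i.val + o) % k := by
  rw [ZMod.val_add, ZMod.val_natCast]
  exact Nat.ModEq.add_left i.val (Nat.mod_modEq o k)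

lemma sub_cast_of_le (i : ZMod k) {o e : ℕ} (h : o ≤ e) :
    (i + (e : ZMod k)) - (i + (o : ZMod k)) = ((e - o : ℕ) : ZMod k) := by
  push_cast [Nat.cast_sub h]; ring

lemma sub_cast_of_le' (i : ZMod k) {o e : ℕ} (h : o ≤ e) (he : e ≤ k) :
    (i + (o : ZMod k)) - (i + (e : ZMod k)) = ((k - (e - o) : ℕ) : ZMod k) := by
  have h1 : (e - o : ℕ) ≤ k := le_trans (Nat.sub_le _ _) he
  rw [Nat.cast_sub h1, Nat.cast_sub h, ZMod.natCast_self]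
  ring

lemma adj_of_gap (hk2 : 2 ≤ k) (i : ZMod k) {o e : ℕ} (hlt : o < e) (he : e < k)
    (hgap2 : 2 ≤ e - o) (hgap : e - o ≤ k - 2) :
    (fromRel (ConstrRel k p)).Adj (true, i + (o : ZMod k)) (true, i + (e : ZMod k)) := by
  rw [adj_yy]
  have h1 : (i + (e : ZMod k)) - (i + (o : ZMod k)) = ((e - o : ℕ) : ZMod k) :=
    sub_cast_of_le i hlt.le
  have h2 : (i + (o : ZMod k)) - (i + (e : ZMod k)) = ((k - (e - o) : ℕ) : ZMod k) :=
    sub_cast_of_le' i hlt.le he.le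
  refine ⟨?_, ?_⟩
  · intro h
    have h3 : (i + (e : ZMod k)) - (i + (o : ZMod k)) = ((0 : ℕ) : ZMod k) := by
      rw [h]; simp
    rw [h1] at h3
    have := cast_inj_of_lt (by omega) (by omega) h3
    omega
  · rintro (h | h)
    · rw [h2] at h
      have := (cast_eq_one_iff (by omega) (by omega)).1 h
      omega
    · rw [h1] at h
      have := (cast_eq_one_iff (by omega) (by omega)).1 h
      omega

end Aux
lemma sep_arith {q a k A B t1 t2 : ℕ} (hq : q = 2*a+1)
    (hb1 : 1 ≤ t1) (hb1' : t1 ≤ 2*a) (hb2 : 1 ≤ t2) (hb2' : t2 ≤ 2*a)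
    (hAB : A = B ∨ A + q ≤ B ∨ B + q ≤ A)
    (hA : A + q ≤ k) (hB : B + q ≤ k)
    (hsame : A = B → t1 = t2 ∨ t1 + 2 ≤ t2 ∨ t2 + 2 ≤ t1) :
    (A + t1 = B + t2 → A = B ∧ t1 = t2) ∧
    (A + t1 < B + t2 → 2 ≤ (B + t2) - (A + t1) ∧ (B + t2) - (A + t1) ≤ k - 2) := by
  constructor <;> intro h <;> rcases hAB with h' | h' | h' <;>
    first
      | omega
      | (rcases hsame h' with h'' | h'' | h'' <;> omega)

lemma builder (p a q k : ℕ) (hp : 2 ≤ p) (ha : 1 ≤ a)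
    (hq : q = 2*a+1) (hk : k = p*q)
    (i : ZMod k) (t : ℕ → ℕ → ℕ)
    (h1 : ∀ s, s < p → ∀ c, c < a → 1 ≤ t s c ∧ t s c ≤ 2*a)
    (h2 : ∀ s, s < p → ∀ c c', c < c' → c' < a → t s c + 2 ≤ t s c') :
    ∃ T : Finset (Bool × ZMod k),
      (fromRel (ConstrRel k p)).IsNClique (p*a) T ∧
      (∀ v ∈ T, ∃ s, s < p ∧ ∃ c, c < a ∧ v = (true, i + ((s*q + t s c : ℕ) : ZMod k))) ∧
      (∀ v ∈ T, (fromRel (ConstrRel k p)).Adj (false, i) v) := by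
  have hk2 : 2*q ≤ k := by rw [hk]; exact Nat.mul_le_mul_right q hp
  haveI : NeZero k := ⟨by omega⟩
  have hqk : q ∣ k := ⟨p, by rw [hk, mul_comm]⟩
  have hkp : k / p = q := by rw [hk]; exact Nat.mul_div_cancel_left q (by omega)
  have hmul : ∀ s, s < p → s*q + q ≤ k := by
    intro s hs
    calc s*q + q = (s+1)*q := by ring
    _ ≤ p*q := Nat.mul_le_mul_right q (by omega)
    _ = k := hk.symm
  have htri : ∀ s1 s2 : ℕ, s1*q = s2*q ∨ s1*q + q ≤ s2*q ∨ s2*q + q ≤ s1*q := by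
    intro s1 s2
    rcases lt_trichotomy s1 s2 with h | h | h
    · refine Or.inr (Or.inl ?_)
      calc s1*q + q = (s1+1)*q := by ring
      _ ≤ s2*q := Nat.mul_le_mul_right q (by omega)
    · exact Or.inl (by rw [h])
    · refine Or.inr (Or.inr ?_)
      calc s2*q + q = (s2+1)*q := by ring
      _ ≤ s1*q := Nat.mul_le_mul_right q (by omega)
  have hsep : ∀ s1 c1 s2 c2, s1 < p → c1 < a → s2 < p → c2 < a →
      (s1*q + t s1 c1 = s2*q + t s2 c2 → s1 = s2 ∧ c1 = c2) ∧
      (s1*q + t s1 c1 < s2*q + t s2 c2 →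
        2 ≤ (s2*q + t s2 c2) - (s1*q + t s1 c1) ∧
        (s2*q + t s2 c2) - (s1*q + t s1 c1) ≤ k - 2) := by
    intro s1 c1 s2 c2 hs1 hc1 hs2 hc2
    obtain ⟨hb1, hb1'⟩ := h1 s1 hs1 c1 hc1
    obtain ⟨hb2, hb2'⟩ := h1 s2 hs2 c2 hc2
    have hsame : s1*q = s2*q → t s1 c1 = t s2 c2 ∨ t s1 c1 + 2 ≤ t s2 c2 ∨
        t s2 c2 + 2 ≤ t s1 c1 := by
      intro hAB
      have hss : s1 = s2 := Nat.eq_of_mul_eq_mul_right (by omega) hAB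
      subst hss
      rcases lt_trichotomy c1 c2 with h | h | h
      · exact Or.inr (Or.inl (h2 s1 hs1 c1 c2 h hc2))
      · exact Or.inl (by rw [h])
      · exact Or.inr (Or.inr (h2 s1 hs1 c2 c1 h hc1))
    have := sep_arith hq hb1 hb1' hb2 hb2' (htri s1 s2) (hmul s1 hs1) (hmul s2 hs2) hsame
    refine ⟨fun h => ?_, this.2⟩
    obtain ⟨hAB, htt⟩ := this.1 h
    have hss : s1 = s2 := Nat.eq_of_mul_eq_mul_right (by omega) hAB
    subst hss
    refine ⟨rfl, ?_⟩
    rcases lt_trichotomy c1 c2 with h' | h' | h'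
    · have := h2 s1 hs1 c1 c2 h' hc2; omega
    · exact h'
    · have := h2 s1 hs1 c2 c1 h' hc1; omega
  have holt : ∀ s, s < p → ∀ c, c < a → s*q + t s c < k := by
    intro s hs c hc
    have := hmul s hs
    have := (h1 s hs c hc).2
    omega
  classical
  refine ⟨(Finset.range p ×ˢ Finset.range a).image
    (fun sc => (true, i + ((sc.1*q + t sc.1 sc.2 : ℕ) : ZMod k))), ⟨?_, ?_⟩, ?_, ?_⟩
  · -- IsClique
    intro v1 hv1 v2 hv2 hne
    simp only [Finset.coe_image, Set.mem_image, Finset.mem_coe, Finset.mem_product,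
      Finset.mem_range] at hv1 hv2
    obtain ⟨⟨s1, c1⟩, ⟨hs1, hc1⟩, rfl⟩ := hv1
    obtain ⟨⟨s2, c2⟩, ⟨hs2, hc2⟩, rfl⟩ := hv2
    have hone : s1*q + t s1 c1 ≠ s2*q + t s2 c2 := by
      intro h
      exact hne (by rw [h])
    rcases Nat.lt_or_ge (s1*q + t s1 c1) (s2*q + t s2 c2) with h | h
    · obtain ⟨g1, g2⟩ := ((hsep s1 c1 s2 c2 hs1 hc1 hs2 hc2).2 h)
      exact adj_of_gap (by omega) i h (holt s2 hs2 c2 hc2) g1 g2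
    · have h' : s2*q + t s2 c2 < s1*q + t s1 c1 := by omega
      obtain ⟨g1, g2⟩ := ((hsep s2 c2 s1 c1 hs2 hc2 hs1 hc1).2 h')
      exact (adj_of_gap (by omega) i h' (holt s1 hs1 c1 hc1) g1 g2).symm
  · -- card
    rw [Finset.card_image_of_injOn, Finset.card_product, Finset.card_range, Finset.card_range]
    intro sc1 hsc1 sc2 hsc2 heq
    simp only [Finset.coe_product, Set.mem_prod, Finset.mem_coe, Finset.mem_range] at hsc1 hsc2
    obtain ⟨hs1, hc1⟩ := hsc1
    obtain ⟨hs2, hc2⟩ := hsc2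
    simp only [Prod.mk.injEq, true_and] at heq
    have heq2 : ((sc1.1*q + t sc1.1 sc1.2 : ℕ) : ZMod k) = ((sc2.1*q + t sc2.1 sc2.2 : ℕ) : ZMod k) := by
      have := heq
      exact add_left_cancel this
    have := cast_inj_of_lt (holt _ hs1 _ hc1) (holt _ hs2 _ hc2) heq2
    have := (hsep sc1.1 sc1.2 sc2.1 sc2.2 hs1 hc1 hs2 hc2).1 this
    exact Prod.ext this.1 this.2
  · -- repr
    intro v hv
    simp only [Finset.mem_image, Finset.mem_product, Finset.mem_range] at hv
    obtain ⟨⟨s, c⟩, ⟨hs, hc⟩, rfl⟩ := hv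
    exact ⟨s, hs, c, hc, rfl⟩
  · -- adj to x_i
    intro v hv
    simp only [Finset.mem_image, Finset.mem_product, Finset.mem_range] at hv
    obtain ⟨⟨s, c⟩, ⟨hs, hc⟩, rfl⟩ := hv
    rw [adj_xy, hkp, val_add_cast, Nat.mod_mod_of_dvd _ hqk]
    intro h
    have h' : (i.val + 0) % q = (i.val + (s*q + t s c)) % q := by simpa using h
    have h2' := Nat.ModEq.add_left_cancel' i.val h'
    have h3 : (s*q + t s c) % q = 0 := by rw [← h2', Nat.zero_mod]
    rw [Nat.add_comm, Nat.add_mul_mod_self_right] at h3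
    have hb := h1 s hs c hc
    rw [Nat.mod_eq_of_lt (by omega)] at h3
    omega
lemma gap_arith (p a q s s0 c e o : ℕ) (hp : p = 2 ∨ p = 3) (hq : q = 2*a+1)
    (hs : s < p) (hc : c < a) (hs01 : 1 ≤ s0) (hs0p : s0 < p)
    (he : e = s0 * q) (ho : o = s*q + (if s = s0 - 1 then 2*c+1 else 2*c+2)) :
    (o < e → 2 ≤ e - o ∧ e - o ≤ p*q - 2) ∧
    (e < o → 2 ≤ o - e ∧ o - e ≤ p*q - 2) := by
  subst hq he ho
  rcases hp with rfl | rfl <;> interval_cases s <;> interval_cases s0 <;> simp <;> omega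
lemma cliquefree (p a q k r : ℕ) (hp : 2 ≤ p) (hp3 : p ≤ 3) (ha : 1 ≤ a)
    (hq : q = 2*a+1) (hk : k = p*q) (hr : r = p*a + 2) :
    (fromRel (ConstrRel k p)).CliqueFree r := by
  have hk2 : 2*q ≤ k := by rw [hk]; exact Nat.mul_le_mul_right q hp
  have hk3 : k ≤ 3*q := by rw [hk]; exact Nat.mul_le_mul_right q hp3
  haveI : NeZero k := ⟨by omega⟩
  have hqk : q ∣ k := ⟨p, by rw [hk, mul_comm]⟩
  have hkp : k / p = q := by rw [hk]; exact Nat.mul_div_cancel_left q (by omega)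
  classical
  intro S hS
  set X := S.filter (fun v => v.1 = false) with hX
  set Y := S.filter (fun v => v.1 = true) with hY
  have hYeq : Y = S.filter (fun v => ¬ v.1 = false) := by
    rw [hY]
    apply Finset.filter_congr
    intro v _
    simp
  have hcard : X.card + Y.card = r := by
    rw [hX, hYeq, Finset.card_filter_add_card_filter_not]
    exact hS.2
  have hkpa : k = 2*(p*a) + p := by rw [hk, hq]; ring
  have hX1 : X.card ≤ 1 := by
    by_contra h
    obtain ⟨u, hu, v, hv, huv⟩ := Finset.one_lt_card.mp (show 1 < X.card by omega)
    obtain ⟨ub, ui⟩ := u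
    obtain ⟨vb, vi⟩ := v
    have hu' := Finset.mem_filter.1 hu
    have hv' := Finset.mem_filter.1 hv
    simp only at hu' hv'
    have hub : ub = false := hu'.2
    have hvb : vb = false := hv'.2
    subst hub; subst hvb
    exact adj_xx ui vi (hS.1 hu'.1 hv'.1 huv)
  -- key independent-set bound machinery
  have hYtrue : ∀ v ∈ Y, v.1 = true := fun v hv => (Finset.mem_filter.1 hv).2
  have hYS : ∀ v ∈ Y, v ∈ S := fun v hv => (Finset.mem_filter.1 hv).1
  rcases Nat.eq_zero_or_pos X.card with hX0 | hXpos
  · -- no x vertices: S is all y's; doubling argument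
    have hally : ∀ v ∈ S, v.1 = true := by
      intro v hv
      rcases Bool.eq_false_or_eq_true v.1 with h | h
      · exact h
      · exfalso
        have : v ∈ X := Finset.mem_filter.2 ⟨hv, h⟩
        rw [Finset.card_eq_zero.1 hX0] at this
        exact absurd this (Finset.notMem_empty v)
    set A := S.image (fun v => v.2) with hA
    have hAcard : A.card = r := by
      rw [hA, Finset.card_image_of_injOn, hS.2]
      intro v hv w hw hvw
      exact Prod.ext (by rw [hally v hv, hally w hw]) hvw
    set B := A.image (fun x => x + 1) with hB
    have hBcard : B.card = A.card := Finset.card_image_of_injective _ (add_left_injective 1)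
    have hone : (1 : ZMod k) ≠ 0 := by
      intro h
      have h0 : ((0:ℕ) : ZMod k) = 1 := by rw [Nat.cast_zero, ← h]
      have := (cast_eq_one_iff (by omega) (by omega)).1 h0
      omega
    have hdisj : Disjoint A B := by
      rw [Finset.disjoint_left]
      intro x hx hx'
      obtain ⟨y, hy, rfl⟩ := Finset.mem_image.1 hx'
      obtain ⟨v, hv, hv2⟩ := Finset.mem_image.1 hx
      obtain ⟨w, hw, hw2⟩ := Finset.mem_image.1 hy
      have hne : w ≠ v := by
        intro h
        rw [h, hv2] at hw2
        exact hone (by linear_combination hw2)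
      have hadj := hS.1 hw hv hne
      obtain ⟨wb, wi⟩ := w
      obtain ⟨vb, vi⟩ := v
      have : wb = true := hally _ hw
      subst this
      have : vb = true := hally _ hv
      subst this
      simp only at hw2 hv2
      subst hw2
      rw [hv2] at hadj
      rw [adj_yy] at hadj
      exact hadj.2 (Or.inr (by ring))
    have hun : A.card + B.card ≤ k := by
      rw [← Finset.card_union_of_disjoint hdisj]
      calc (A ∪ B).card ≤ Fintype.card (ZMod k) := Finset.card_le_univ _
      _ = k := ZMod.card k
    omega
  · -- exactly one x vertex
    have hX1' : X.card = 1 := by omega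
    obtain ⟨x0, hx0⟩ := Finset.card_eq_one.1 hX1'
    obtain ⟨xb, i0⟩ := x0
    have hx0X : (xb, i0) ∈ X := by rw [hx0]; exact Finset.mem_singleton_self _
    have hx0S : (xb, i0) ∈ S := (Finset.mem_filter.1 hx0X).1
    have hxb : xb = false := (Finset.mem_filter.1 hx0X).2
    subst hxb
    have hYcard : Y.card = p*a + 1 := by omega
    -- every y in Y is adjacent to x0
    have hYadj : ∀ v ∈ Y, 1 ≤ (v.2 - i0).val % q ∧ (v.2 - i0).val % q ≤ 2*a := by
      intro v hv
      obtain ⟨vb, vi⟩ := v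
      have hvb : vb = true := hYtrue _ hv
      subst hvb
      have hne : ((false, i0) : Bool × ZMod k) ≠ (true, vi) := by simp
      have hadj := hS.1 hx0S (hYS _ hv) hne
      rw [adj_xy, hkp] at hadj
      have hvi : vi = i0 + (((vi - i0).val : ℕ) : ZMod k) := by rw [cast_val_eq]; ring
      rw [hvi, val_add_cast, Nat.mod_mod_of_dvd _ hqk] at hadj
      simp only
      set w := (vi - i0).val with hw
      have hne0 : w % q ≠ 0 := by
        intro h
        apply hadj
        obtain ⟨u, hu⟩ := Nat.dvd_of_mod_eq_zero h
        rw [hu, Nat.mul_comm, Nat.add_mul_mod_self_right]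
      have := Nat.mod_lt w (y := q) (by omega)
      omega
    -- the injection
    set f : Bool × ZMod k → ℕ × ℕ :=
      fun v => ((v.2 - i0).val / q, ((v.2 - i0).val % q + 1)/2) with hf
    have hinj : Set.InjOn f ↑Y := by
      intro v1 hv1' v2 hv2' hfeq
      have hv1 : v1 ∈ Y := hv1'
      have hv2 : v2 ∈ Y := hv2'
      by_contra hne
      obtain ⟨b1, i1⟩ := v1
      obtain ⟨b2, i2⟩ := v2
      have hb1 : b1 = true := hYtrue _ hv1
      have hb2 : b2 = true := hYtrue _ hv2
      subst hb1; subst hb2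
      set w1 := (i1 - i0).val with hw1
      set w2 := (i2 - i0).val with hw2
      have hww : w1 ≠ w2 := by
        intro h
        apply hne
        have : i1 - i0 = i2 - i0 := by
          rw [← cast_val_eq (i1 - i0), ← cast_val_eq (i2 - i0), ← hw1, ← hw2, h]
        have : i1 = i2 := by linear_combination this
        rw [this]
      simp only [hf, Prod.mk.injEq] at hfeq
      obtain ⟨hdiv, hmod⟩ := hfeq
      have hb1' := hYadj _ hv1
      have hb2' := hYadj _ hv2
      simp only [← hw1, ← hw2] at hb1' hb2' hdiv hmod
      have e1 : q * (w1/q) + w1 % q = w1 := Nat.div_add_mod w1 q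
      have e2 : q * (w2/q) + w2 % q = w2 := Nat.div_add_mod w2 q
      rw [← hdiv] at e2
      set M := q * (w1/q) with hM
      -- so w1 and w2 differ by exactly 1
      have hcons : w1 + 1 = w2 ∨ w2 + 1 = w1 := by omega
      -- derive contradiction from adjacency
      have hne12 : ((true, i1) : Bool × ZMod k) ≠ (true, i2) := by
        intro h
        exact hne h
      have hadj := hS.1 (hYS _ hv1) (hYS _ hv2) hne12
      rw [adj_yy] at hadj
      have hi1 : i1 = i0 + ((w1 : ℕ) : ZMod k) := by rw [hw1, cast_val_eq]; ring
      have hi2 : i2 = i0 + ((w2 : ℕ) : ZMod k) := by rw [hw2, cast_val_eq]; ring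
      rcases hcons with h | h
      · apply hadj.2
        refine Or.inr ?_
        rw [hi1, hi2, sub_cast_of_le i0 (by omega : w1 ≤ w2), show w2 - w1 = 1 by omega]
        norm_num
      · apply hadj.2
        refine Or.inl ?_
        rw [hi1, hi2, sub_cast_of_le i0 (by omega : w2 ≤ w1), show w1 - w2 = 1 by omega]
        norm_num
    have himg : Y.image f ⊆ (Finset.range p) ×ˢ (Finset.Icc 1 a) := by
      intro x hx
      obtain ⟨v, hv, rfl⟩ := Finset.mem_image.1 hx
      have hb := hYadj v hv
      have hwlt : (v.2 - i0).val < k := ZMod.val_lt _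
      simp only [hf, Finset.mem_product, Finset.mem_range, Finset.mem_Icc]
      constructor
      · rw [Nat.div_lt_iff_lt_mul (by omega : 0 < q), ← hk]
        exact hwlt
      · omega
    have : Y.card ≤ p * a := by
      calc Y.card = (Y.image f).card := (Finset.card_image_of_injOn hinj).symm
      _ ≤ ((Finset.range p) ×ˢ (Finset.Icc 1 a)).card := Finset.card_le_card himg
      _ = p * a := by rw [Finset.card_product, Finset.card_range, Nat.card_Icc]; simp
    omega
theorem stmt_13 (r p : ℕ) (hr : 3 ≤ r) (hp : p = 2 ∨ p = 3) (hdvd : p ∣ r - 2)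
    (G : SimpleGraph (Bool × ZMod (2 * r - 4 + p)))
    (hG : G = SimpleGraph.fromRel (ConstrRel (2 * r - 4 + p) p)) :
    G.CliqueFree r ∧
    -- every pair x_i, x_j with i ≠ j has an (r-2)-clique in its common neighborhood
    (∀ i j : ZMod (2 * r - 4 + p), i ≠ j →
      ∃ T : Finset (Bool × ZMod (2 * r - 4 + p)), G.IsNClique (r - 2) T ∧
        ∀ v ∈ T, G.Adj (false, i) v ∧ G.Adj (false, j) v) ∧
    -- every non-adjacent pair x_i, y_j from different parts has an (r-2)-clique
    -- in its common neighborhood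
    (∀ i j : ZMod (2 * r - 4 + p), i ≠ j → ¬ G.Adj (false, i) (true, j) →
      ∃ T : Finset (Bool × ZMod (2 * r - 4 + p)), G.IsNClique (r - 2) T ∧
        ∀ v ∈ T, G.Adj (false, i) v ∧ G.Adj (true, j) v) ∧
    -- each x_i has degree exactly 2r - 4
    (∀ i : ZMod (2 * r - 4 + p), (G.neighborSet (false, i)).ncard = 2 * r - 4) := by
  subst hG
  classical
  obtain ⟨a, ha⟩ := hdvd
  have hp2 : 2 ≤ p := by rcases hp with rfl | rfl <;> omega
  have hp3 : p ≤ 3 := by rcases hp with rfl | rfl <;> omega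
  have ha1 : 1 ≤ a := by
    rcases Nat.eq_zero_or_pos a with h | h
    · subst h; simp at ha; omega
    · exact h
  have hkq : 2 * r - 4 + p = p * (2*a+1) := by
    have h2r : 2*r - 4 + p = 2*(r-2) + p := by omega
    rw [h2r, ha]; ring
  have hra : r - 2 = p * a := ha
  have hq2 : 2*(2*a+1) ≤ 2*r-4+p := by
    rw [hkq]; exact Nat.mul_le_mul_right _ hp2
  haveI : NeZero (2 * r - 4 + p) := ⟨by omega⟩
  have hqk : (2*a+1) ∣ (2*r-4+p) := ⟨p, by rw [hkq, mul_comm]⟩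
  have hkp : (2*r-4+p) / p = 2*a+1 := by
    rw [hkq]; exact Nat.mul_div_cancel_left _ (by omega)
  refine ⟨?_, ?_, ?_, ?_⟩
  · -- clique free
    exact cliquefree p a (2*a+1) _ r hp2 hp3 ha1 rfl hkq (by omega)
  · -- pairs x_i x_j
    intro i j hij
    set q := 2*a+1 with hqdef
    set d := (j - i).val % q with hd
    have hdlt : d < q := Nat.mod_lt _ (by omega)
    obtain ⟨T, hclique, hrepr, hadjx⟩ := builder p a q _ hp2 ha1 rfl hkq i
      (fun s c => if 2*c+1 < d then 2*c+1 else 2*c+2)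
      (by intro s hs c hc; split <;> omega)
      (by intro s hs c c' hcc hc'; split <;> split <;> omega)
    refine ⟨T, by rw [hra]; exact hclique, ?_⟩
    intro v hv
    refine ⟨hadjx v hv, ?_⟩
    obtain ⟨s, hs, c, hc, rfl⟩ := hrepr v hv
    rw [adj_xy, hkp]
    have hj : j = i + (((j - i).val : ℕ) : ZMod _) := by rw [cast_val_eq]; ring
    rw [hj, val_add_cast, val_add_cast, Nat.mod_mod_of_dvd _ hqk, Nat.mod_mod_of_dvd _ hqk]
    intro heq
    -- reduce to d = t
    have h1 : (i.val + (j-i).val) % q = (i.val + d) % q := by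
      rw [hd]
      exact Nat.ModEq.add_left i.val (Nat.mod_modEq _ q).symm
    rw [h1] at heq
    have h2 := Nat.ModEq.add_left_cancel' i.val heq
    set t := (if 2*c+1 < d then 2*c+1 else 2*c+2) with ht
    have htb : 1 ≤ t ∧ t ≤ 2*a ∧ t ≠ d := by rw [ht]; split <;> omega
    have h3 : d % q = t % q := by
      have : (s*q + t) % q = t % q := by rw [Nat.add_comm, Nat.add_mul_mod_self_right]
      rw [← this]; exact h2
    rw [Nat.mod_eq_of_lt hdlt, Nat.mod_eq_of_lt (by omega)] at h3
    exact htb.2.2 h3.symm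
  · -- pairs x_i y_j nonadjacent
    intro i j hij hnadj
    set q := 2*a+1 with hqdef
    rw [adj_xy, hkp] at hnadj
    push_neg at hnadj
    set e := (j - i).val with he
    have hjeq : j = i + ((e : ℕ) : ZMod _) := by rw [he, cast_val_eq]; ring
    have helt : e < 2*r-4+p := ZMod.val_lt _
    have hmod : e % q = 0 := by
      have h1 : j.val % q = (i.val + e) % q := by
        rw [hjeq, val_add_cast, Nat.mod_mod_of_dvd _ hqk]
      have h2 : (i.val + 0) % q = (i.val + e) % q := by
        rw [Nat.add_zero, hnadj, h1]
      have h3 := Nat.ModEq.add_left_cancel' i.val h2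
      rw [← h3, Nat.zero_mod]
    have hene : e ≠ 0 := by
      intro h
      apply hij
      rw [hjeq, h]; simp
    set s0 := e / q with hs0
    have hes0 : e = s0 * q := by
      rw [hs0, Nat.div_mul_cancel (Nat.dvd_of_mod_eq_zero hmod)]
    have hs01 : 1 ≤ s0 := by
      rcases Nat.eq_zero_or_pos s0 with h | h
      · rw [h] at hes0; simp at hes0; omega
      · exact h
    have hs0p : s0 < p := by
      rw [hs0, Nat.div_lt_iff_lt_mul (by omega : 0 < q), ← hkq]
      exact helt
    obtain ⟨T, hclique, hrepr, hadjx⟩ := builder p a q _ hp2 ha1 rfl hkq i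
      (fun s c => if s = s0 - 1 then 2*c+1 else 2*c+2)
      (by intro s hs c hc; split <;> omega)
      (by intro s hs c c' hcc hc'; split <;> omega)
    refine ⟨T, by rw [hra]; exact hclique, ?_⟩
    intro v hv
    refine ⟨hadjx v hv, ?_⟩
    obtain ⟨s, hs, c, hc, rfl⟩ := hrepr v hv
    rw [hjeq]
    set t := (if s = s0 - 1 then 2*c+1 else 2*c+2) with ht
    set o := s*q + t with ho
    have hok : o < 2*r-4+p := by
      have h1 : s*q + q ≤ p*q := by
        calc s*q + q = (s+1)*q := by ring
        _ ≤ p*q := Nat.mul_le_mul_right q (by omega)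
      have htb : t ≤ 2*a := by rw [ht]; split <;> omega
      rw [ho]; rw [hkq]; omega
    have hone : o ≠ e := by
      intro h
      have h1 : o % q = t % q := by rw [ho, Nat.add_comm, Nat.add_mul_mod_self_right]
      have h2 : e % q = 0 := hmod
      have htb : 1 ≤ t ∧ t ≤ 2*a := by rw [ht]; split <;> omega
      rw [h, h2, Nat.mod_eq_of_lt (by omega)] at h1
      omega
    have hgap0 := gap_arith p a q s s0 c e o hp rfl hs hc hs01 hs0p hes0 (by rw [ho, ht])
    rw [← hkq] at hgap0
    have hgap := hgap0
    rcases Nat.lt_or_ge o e with h | h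
    · exact (adj_of_gap (by omega) i h helt (hgap.1 h).1 (hgap.1 h).2).symm
    · have h' : e < o := by omega
      exact adj_of_gap (by omega) i h' hok (hgap.2 h').1 (hgap.2 h').2
  · -- degrees
    intro i
    set q := 2*a+1 with hqdef
    set c0 := i.val % q with hc0
    have hc0q : c0 < q := Nat.mod_lt _ (by omega)
    have hset : (fromRel (ConstrRel (2*r-4+p) p)).neighborSet (false, i) =
        (fun j => ((true, j) : Bool × ZMod (2*r-4+p))) ''
          {j : ZMod (2*r-4+p) | ¬ j.val % q = c0} := by
      ext ⟨b, j⟩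
      cases b
      · simp only [mem_neighborSet, Set.mem_image, Set.mem_setOf_eq]
        constructor
        · intro h; exact absurd h (adj_xx i j)
        · rintro ⟨y, _, h⟩; exact absurd h (by simp)
      · simp only [mem_neighborSet, Set.mem_image, Set.mem_setOf_eq]
        rw [adj_xy, hkp]
        constructor
        · intro h; exact ⟨j, fun hh => h (by rw [hh, hc0]), rfl⟩
        · rintro ⟨y, hy, h⟩
          have : y = j := by simpa using h
          subst this
          intro hh
          exact hy (by rw [← hh, hc0])
    rw [hset, Set.ncard_image_of_injective _ (fun x y h => by simpa using h)]
    have hsetF : {j : ZMod (2*r-4+p) | ¬ j.val % q = c0} =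
        ↑(Finset.univ \ (Finset.range p).image
            (fun s => ((c0 + s*q : ℕ) : ZMod (2*r-4+p)))) := by
      ext j
      simp only [Set.mem_setOf_eq, Finset.coe_sdiff, Set.mem_diff, Finset.coe_image,
        Finset.coe_univ, Set.mem_univ, true_and, Set.mem_image, Finset.mem_coe,
        Finset.mem_range]
      constructor
      · intro h
        rintro ⟨s, hs, rfl⟩
        apply h
        have hlt : c0 + s*q < 2*r-4+p := by
          have h1 : s*q + q ≤ p*q := by
            calc s*q + q = (s+1)*q := by ring
            _ ≤ p*q := Nat.mul_le_mul_right q (by omega)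
          rw [hkq]; omega
        rw [ZMod.val_natCast_of_lt hlt, Nat.add_mul_mod_self_right, Nat.mod_eq_of_lt hc0q]
      · intro h hj
        apply h
        refine ⟨j.val / q, ?_, ?_⟩
        · rw [Nat.div_lt_iff_lt_mul (by omega : 0 < q), ← hkq]
          exact ZMod.val_lt _
        · rw [← hj]
          have : j.val % q + (j.val / q) * q = j.val := by
            rw [Nat.add_comm, Nat.mul_comm]
            exact Nat.div_add_mod j.val q
          rw [this, cast_val_eq]
    rw [hsetF, Set.ncard_coe_finset, Finset.card_sdiff_of_subset (Finset.subset_univ _)]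
    have hcardim : ((Finset.range p).image
        (fun s => ((c0 + s*q : ℕ) : ZMod (2*r-4+p)))).card = p := by
      rw [Finset.card_image_of_injOn, Finset.card_range]
      intro s1 hs1 s2 hs2 heq
      simp only [Finset.coe_range, Set.mem_Iio] at hs1 hs2
      have hlt : ∀ s, s < p → c0 + s*q < 2*r-4+p := by
        intro s hs
        have h1 : s*q + q ≤ p*q := by
          calc s*q + q = (s+1)*q := by ring
          _ ≤ p*q := Nat.mul_le_mul_right q (by omega)
        rw [hkq]; omega
      have := cast_inj_of_lt (hlt s1 hs1) (hlt s2 hs2) heq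
      have := Nat.eq_of_mul_eq_mul_right (show 0 < q by omega) (by omega : s1*q = s2*q)
      exact this
    rw [hcardim, Finset.card_univ, ZMod.card]
    omega
end
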